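/- arXiv:math/0610389 — 4 statements merged into one kernel-verified Lean document; each statement's English description precedes it below -/
import Mathlib

section
/- Let U be uniform on [0,1] and U_1, U_2, … i.i.d. uniform on [0,1] independent of U. Set Y_n = (1/n)∑_{k=1}^n 1_{U_k ≤ U}. Then for φ(y) = e^{2iπpy} and χ(y) = e^{2iπqy} with p, q ∈ ℤ, lim_n n·E[(φ(Y_n) − φ(U))χ(U)] = E[((U−U²)/2)·φ''(U)·χ(U)] = ∫₀¹ (−(y−y²)/2)(2πp)² e^{2iπ(p+q)y} dy. -/
open MeasureTheory ProbabilityTheory Filter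
open Finset Topology

lemma expb2 {z : ℂ} (hz : ‖z‖ ≤ 1) : ‖Complex.exp z - (1 + z)‖ ≤ ‖z‖^2 := by
  have h := Complex.exp_bound (n := 2) (by simpa using hz) (by norm_num)
  simp only [Finset.sum_range_succ, Finset.sum_range_zero, Nat.factorial] at h
  norm_num at h
  nlinarith [norm_nonneg z, sq_nonneg ‖z‖, h]

lemma expb3 {z : ℂ} (hz : ‖z‖ ≤ 1) : ‖Complex.exp z - (1 + z + z^2/2)‖ ≤ ‖z‖^3 := by
  have h := Complex.exp_bound (n := 3) (by simpa using hz) (by norm_num)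
  simp only [Finset.sum_range_succ, Finset.sum_range_zero, Nat.factorial] at h
  norm_num at h
  nlinarith [norm_nonneg z, pow_nonneg (norm_nonneg z) 3, h]

lemma tele {w v : ℂ} (hw : ‖w‖ ≤ 1) (hv : ‖v‖ ≤ 1) : ∀ n : ℕ, ‖w^n - v^n‖ ≤ n * ‖w - v‖
  | 0 => by simp
  | (n+1) => by
    have h1 : w^(n+1) - v^(n+1) = w^n*(w - v) + (w^n - v^n)*v := by ring
    rw [h1]
    calc ‖w^n*(w - v) + (w^n - v^n)*v‖ ≤ ‖w^n*(w-v)‖ + ‖(w^n - v^n)*v‖ := norm_add_le _ _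
      _ ≤ 1*‖w - v‖ + (n*‖w - v‖)*1 := by
          rw [norm_mul, norm_mul]
          gcongr
          · simpa using pow_le_one₀ (norm_nonneg w) hw
          · exact tele hw hv n
      _ ≤ ((n+1 : ℕ) : ℝ) * ‖w - v‖ := by push_cast; nlinarith [norm_nonneg (w - v)]

lemma L0 (z : ℂ) :
    Tendsto (fun n : ℕ => (n:ℂ)^2 * (Complex.exp (z / n) - 1 - z / n)) atTop (𝓝 (z^2/2)) := by
  have key : ∀ᶠ n : ℕ in atTop,
      ‖(n:ℂ)^2 * (Complex.exp (z / n) - 1 - z / n) - z^2/2‖ ≤ ‖z‖^3 / n := by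
    filter_upwards [eventually_ge_atTop (⌈‖z‖⌉₊ + 1)] with n hn
    have hn1 : 1 ≤ n := le_trans (Nat.le_add_left 1 _) hn
    have hzn : ‖z‖ ≤ (n:ℝ) := by
      calc ‖z‖ ≤ (⌈‖z‖⌉₊ : ℝ) := Nat.le_ceil _
        _ ≤ (n:ℝ) := by exact_mod_cast le_trans (Nat.le_add_right _ 1) hn
    have hn0 : (n:ℂ) ≠ 0 := Nat.cast_ne_zero.2 (by omega)
    have hnR : (0:ℝ) < (n:ℝ) := by exact_mod_cast hn1
    have heq : (n:ℂ)^2 * (Complex.exp (z / n) - 1 - z / n) - z^2/2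
        = (n:ℂ)^2 * (Complex.exp (z/n) - (1 + z/n + (z/n)^2/2)) := by
      field_simp; ring
    rw [heq, norm_mul]
    have hb : ‖Complex.exp (z/n) - (1 + z/n + (z/n)^2/2)‖ ≤ ‖z/n‖^3 :=
      expb3 (by rw [norm_div, Complex.norm_natCast, div_le_one hnR]; exact hzn)
    calc ‖(n:ℂ)^2‖ * ‖Complex.exp (z/n) - (1 + z/n + (z/n)^2/2)‖
        ≤ (n:ℝ)^2 * ‖z/n‖^3 := by
          rw [norm_pow, Complex.norm_natCast]; exact mul_le_mul_of_nonneg_left hb (by positivity)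
      _ = ‖z‖^3 / n := by rw [norm_div, Complex.norm_natCast]; field_simp
  have h0 : Tendsto (fun n : ℕ => ‖z‖^3 / n) atTop (𝓝 0) :=
    tendsto_const_div_atTop_nhds_zero_nat _
  exact tendsto_sub_nhds_zero_iff.mp (squeeze_zero_norm' key h0)


lemma Lsum {w v : ℕ → ℂ} (hw : ∀ n, ‖w n‖ ≤ 1) (hv : ∀ n, ‖v n‖ ≤ 1) {c L : ℂ}
    (hc : Tendsto (fun n : ℕ => (n:ℂ)^2 * (w n - v n)) atTop (𝓝 c))
    (hvn : Tendsto (fun n : ℕ => (v n)^n) atTop (𝓝 L))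
    (hv1 : Tendsto v atTop (𝓝 1)) :
    Tendsto (fun n : ℕ => (n:ℂ) * ((w n)^n - (v n)^n)) atTop (𝓝 (c * L)) := by
  set S : ℕ → ℂ := fun n => ∑ k ∈ Finset.range n, (w n)^k * (v n)^(n-1-k) with hS_def
  have hnorm : Tendsto (fun n : ℕ => (n:ℝ)^2 * ‖w n - v n‖) atTop (𝓝 ‖c‖) := by
    have := hc.norm
    simpa [norm_mul] using this
  have hd0 : Tendsto (fun n : ℕ => (n:ℝ) * ‖w n - v n‖) atTop (𝓝 0) := by
    have h1 : Tendsto (fun n : ℕ => (1/(n:ℝ)) * ((n:ℝ)^2 * ‖w n - v n‖)) atTop (𝓝 (0 * ‖c‖)) :=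
      Tendsto.mul (tendsto_one_div_atTop_nhds_zero_nat) hnorm
    rw [zero_mul] at h1
    apply h1.congr'
    filter_upwards [eventually_ge_atTop 1] with n hn
    have h0 : (n:ℝ) ≠ 0 := by positivity
    field_simp
  have hvne : ∀ᶠ n : ℕ in atTop, v n ≠ 0 := hv1.eventually_ne one_ne_zero
  -- v n ^ (n - 1) → L
  have hT : Tendsto (fun n : ℕ => (v n)^(n-1)) atTop (𝓝 L) := by
    have h1 : Tendsto (fun n : ℕ => (v n)^n / v n) atTop (𝓝 (L / 1)) := hvn.div hv1 one_ne_zero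
    rw [div_one] at h1
    apply h1.congr'
    filter_upwards [hvne, eventually_ge_atTop 1] with n hn hn1
    rw [eq_comm, pow_sub₀ _ hn (by omega), pow_one]
    rfl
  -- S n / n → L
  have hSdiff : ∀ᶠ n : ℕ in atTop, ‖S n / n - (v n)^(n-1)‖ ≤ (n:ℝ) * ‖w n - v n‖ := by
    filter_upwards [eventually_ge_atTop 1] with n hn1
    have hn0 : (n:ℂ) ≠ 0 := Nat.cast_ne_zero.2 (by omega)
    have hkey : S n - n * (v n)^(n-1) = ∑ k ∈ Finset.range n, ((w n)^k * (v n)^(n-1-k) - (v n)^(n-1)) := by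
      rw [Finset.sum_sub_distrib, Finset.sum_const, Finset.card_range]
      simp [nsmul_eq_mul]
      rfl
    have hterm : ∀ k ∈ Finset.range n, ‖(w n)^k * (v n)^(n-1-k) - (v n)^(n-1)‖ ≤ (n:ℝ) * ‖w n - v n‖ := by
      intro k hk
      rw [Finset.mem_range] at hk
      have hsplit : (v n)^(n-1) = (v n)^(n-1-k) * (v n)^k := by
        rw [← pow_add]; congr 1; omega
      rw [hsplit]
      have : (w n)^k * (v n)^(n-1-k) - (v n)^(n-1-k) * (v n)^k
          = (v n)^(n-1-k) * ((w n)^k - (v n)^k) := by ring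
      rw [this, norm_mul]
      calc ‖(v n)^(n-1-k)‖ * ‖(w n)^k - (v n)^k‖
          ≤ 1 * ((k:ℝ) * ‖w n - v n‖) := by
            apply mul_le_mul _ (tele (hw n) (hv n) k) (norm_nonneg _) zero_le_one
            rw [norm_pow]; exact pow_le_one₀ (norm_nonneg _) (hv n)
        _ ≤ (n:ℝ) * ‖w n - v n‖ := by
            rw [one_mul]; exact mul_le_mul_of_nonneg_right (by exact_mod_cast hk.le) (norm_nonneg _)
    have hnR : (0:ℝ) < (n:ℝ) := by exact_mod_cast hn1
    have : ‖S n - n * (v n)^(n-1)‖ ≤ (n:ℝ) * ((n:ℝ) * ‖w n - v n‖) := by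
      rw [hkey]
      calc ‖∑ k ∈ Finset.range n, ((w n)^k * (v n)^(n-1-k) - (v n)^(n-1))‖
          ≤ ∑ k ∈ Finset.range n, ‖(w n)^k * (v n)^(n-1-k) - (v n)^(n-1)‖ := norm_sum_le _ _
        _ ≤ ∑ _k ∈ Finset.range n, (n:ℝ) * ‖w n - v n‖ := Finset.sum_le_sum hterm
        _ = (n:ℝ) * ((n:ℝ) * ‖w n - v n‖) := by rw [Finset.sum_const, Finset.card_range, nsmul_eq_mul]
    have heq : S n / n - (v n)^(n-1) = (S n - n * (v n)^(n-1)) / n := by field_simp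
    rw [heq, norm_div, Complex.norm_natCast, div_le_iff₀ hnR]
    calc ‖S n - ↑n * v n ^ (n-1)‖ ≤ (n:ℝ) * ((n:ℝ) * ‖w n - v n‖) := this
      _ = (n:ℝ) * ‖w n - v n‖ * (n:ℝ) := by ring
  have hS : Tendsto (fun n : ℕ => S n / n) atTop (𝓝 L) := by
    have hdiff0 : Tendsto (fun n : ℕ => S n / n - (v n)^(n-1)) atTop (𝓝 0) :=
      squeeze_zero_norm' hSdiff hd0
    have := hT.add hdiff0
    rw [add_zero] at this
    apply this.congr
    intro n; ring
  have hfinal := hc.mul hS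
  apply hfinal.congr'
  filter_upwards [eventually_ge_atTop 1] with n hn1
  have hn0 : (n:ℂ) ≠ 0 := Nat.cast_ne_zero.2 (by omega)
  have hgeom : S n * (w n - v n) = (w n)^n - (v n)^n := geom_sum₂_mul (w n) (v n) n
  rw [← hgeom]
  field_simp


lemma norm_exp_re_zero {w : ℂ} (hw : w.re = 0) : ‖Complex.exp w‖ = 1 := by
  rw [Complex.norm_exp, hw, Real.exp_zero]

lemma re_mul_real {ζ : ℂ} (h : ζ.re = 0) (r : ℝ) : (ζ * (r:ℂ)).re = 0 := by
  simp [Complex.mul_re, h]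

lemma div_nat_eq (ζ : ℂ) (n : ℕ) : ζ / (n:ℂ) = ζ * (((n:ℝ)⁻¹ : ℝ):ℂ) := by
  push_cast; ring

lemma re_div_nat {ζ : ℂ} (h : ζ.re = 0) (n : ℕ) : (ζ / (n:ℂ)).re = 0 := by
  rw [div_nat_eq]; exact re_mul_real h _

lemma hw_le_one {ζ : ℂ} (hζ : ζ.re = 0) {y : ℝ} (hy0 : 0 ≤ y) (hy1 : y ≤ 1) (n : ℕ) :
    ‖1 + (Complex.exp (ζ/(n:ℂ)) - 1) * (y:ℂ)‖ ≤ 1 := by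
  have hsplit : 1 + (Complex.exp (ζ/(n:ℂ)) - 1) * (y:ℂ)
      = ((1 - y : ℝ):ℂ) + (y:ℂ) * Complex.exp (ζ/(n:ℂ)) := by push_cast; ring
  rw [hsplit]
  calc ‖((1 - y : ℝ):ℂ) + (y:ℂ) * Complex.exp (ζ/(n:ℂ))‖
      ≤ ‖((1 - y : ℝ):ℂ)‖ + ‖(y:ℂ) * Complex.exp (ζ/(n:ℂ))‖ := norm_add_le _ _
    _ = |1 - y| + |y| * 1 := by
        rw [norm_mul, Complex.norm_real, Complex.norm_real, norm_exp_re_zero (re_div_nat hζ n)]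
        simp [Real.norm_eq_abs]
    _ ≤ 1 := by rw [abs_of_nonneg (by linarith), abs_of_nonneg hy0]; linarith

lemma v_tendsto_one {ζ : ℂ} (y : ℝ) :
    Tendsto (fun n : ℕ => Complex.exp (ζ * (y:ℂ) / (n:ℂ))) atTop (𝓝 1) := by
  have h1 : Tendsto (fun n : ℕ => ((n:ℝ)⁻¹ : ℝ)) atTop (𝓝 0) :=
    tendsto_inv_atTop_nhds_zero_nat
  have h2 : Tendsto (fun n : ℕ => (((n:ℝ)⁻¹ : ℝ) : ℂ)) atTop (𝓝 0) := by
    have := (Complex.continuous_ofReal.tendsto 0).comp h1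
    simpa [Function.comp_def] using this
  have h3 : Tendsto (fun n : ℕ => ζ * (y:ℂ) * (((n:ℝ)⁻¹ : ℝ):ℂ)) atTop (𝓝 0) := by
    have := h2.const_mul (ζ * (y:ℂ))
    simpa using this
  have h4 : Tendsto (fun n : ℕ => ζ * (y:ℂ) / (n:ℂ)) atTop (𝓝 0) := by
    apply h3.congr; intro n; rw [← div_nat_eq (ζ * (y:ℂ)) n]
  have := (Complex.continuous_exp.tendsto 0).comp h4
  simpa [Function.comp_def] using this

lemma vn_pow_tendsto {ζ : ℂ} (y : ℝ) :
    Tendsto (fun n : ℕ => (Complex.exp (ζ * (y:ℂ) / (n:ℂ)))^n) atTop (𝓝 (Complex.exp (ζ * (y:ℂ)))) := by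
  apply tendsto_const_nhds.congr'
  filter_upwards [eventually_ge_atTop 1] with n hn
  have hn0 : (n:ℂ) ≠ 0 := Nat.cast_ne_zero.2 (by omega)
  rw [← Complex.exp_nat_mul]
  congr 1
  field_simp

lemma Lpt {ζ : ℂ} (hζ : ζ.re = 0) {y : ℝ} (hy0 : 0 ≤ y) (hy1 : y ≤ 1) :
    Tendsto (fun n : ℕ => (n:ℂ) * ((1 + (Complex.exp (ζ/(n:ℂ)) - 1) * (y:ℂ))^n
      - Complex.exp (ζ * (y:ℂ)))) atTop
      (𝓝 (ζ^2 * ((y:ℂ) - (y:ℂ)^2)/2 * Complex.exp (ζ * (y:ℂ)))) := by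
  set w : ℕ → ℂ := fun n => 1 + (Complex.exp (ζ/(n:ℂ)) - 1) * (y:ℂ) with hwdef
  set v : ℕ → ℂ := fun n => Complex.exp (ζ * (y:ℂ) / (n:ℂ)) with hvdef
  have hw : ∀ n, ‖w n‖ ≤ 1 := fun n => hw_le_one hζ hy0 hy1 n
  have hv : ∀ n, ‖v n‖ ≤ 1 := by
    intro n
    have : (ζ * (y:ℂ) / (n:ℂ)).re = 0 := by
      rw [div_nat_eq]
      exact re_mul_real (re_mul_real hζ y) _
    rw [hvdef]; exact le_of_eq (norm_exp_re_zero this)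
  have hc : Tendsto (fun n : ℕ => (n:ℂ)^2 * (w n - v n)) atTop
      (𝓝 ((y:ℂ) * (ζ^2/2) - (ζ * (y:ℂ))^2/2)) := by
    have h := ((L0 ζ).const_mul (y:ℂ)).sub (L0 (ζ * (y:ℂ)))
    apply h.congr
    intro n
    simp only [hwdef, hvdef]
    ring
  have H := Lsum hw hv hc (vn_pow_tendsto y) (v_tendsto_one y)
  have heq : ((y:ℂ) * (ζ^2/2) - (ζ * (y:ℂ))^2/2) * Complex.exp (ζ * (y:ℂ))
      = ζ^2 * ((y:ℂ) - (y:ℂ)^2)/2 * Complex.exp (ζ * (y:ℂ)) := by ring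
  rw [heq] at H
  apply H.congr'
  filter_upwards [eventually_ge_atTop 1] with n hn
  have hn0 : (n:ℂ) ≠ 0 := Nat.cast_ne_zero.2 (by omega)
  congr 2
  rw [hvdef]
  simp only
  rw [← Complex.exp_nat_mul]
  congr 1
  field_simp

lemma Lbd {ζ : ℂ} (hζ : ζ.re = 0) {y : ℝ} (hy0 : 0 ≤ y) (hy1 : y ≤ 1) (n : ℕ) :
    (n:ℝ) * ‖(1 + (Complex.exp (ζ/(n:ℂ)) - 1) * (y:ℂ))^n - Complex.exp (ζ * (y:ℂ))‖
      ≤ 2*‖ζ‖ + 2*‖ζ‖^2 := by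
  have hζnn : (0:ℝ) ≤ ‖ζ‖ := norm_nonneg ζ
  rcases Nat.eq_zero_or_pos n with hn | hn
  · subst hn; simp; positivity
  have hn0 : (n:ℂ) ≠ 0 := Nat.cast_ne_zero.2 (by omega)
  have hnR : (0:ℝ) < (n:ℝ) := by exact_mod_cast hn
  set w : ℂ := 1 + (Complex.exp (ζ/(n:ℂ)) - 1) * (y:ℂ) with hwdef
  set v : ℂ := Complex.exp (ζ * (y:ℂ) / (n:ℂ)) with hvdef
  have hexpζy : Complex.exp (ζ * (y:ℂ)) = v^n := by
    rw [hvdef, ← Complex.exp_nat_mul]; congr 1; field_simp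
  have hw1 : ‖w‖ ≤ 1 := hw_le_one hζ hy0 hy1 n
  have hv1 : ‖v‖ = 1 := by
    apply norm_exp_re_zero
    rw [div_nat_eq]; exact re_mul_real (re_mul_real hζ y) _
  rw [hexpζy]
  by_cases hcase : (n:ℝ) ≤ ‖ζ‖
  · have h2 : ‖w^n - v^n‖ ≤ 2 := by
      calc ‖w^n - v^n‖ ≤ ‖w^n‖ + ‖v^n‖ := norm_sub_le _ _
        _ ≤ 1 + 1 := by
            rw [norm_pow, norm_pow, hv1, one_pow]
            gcongr
            exact pow_le_one₀ (norm_nonneg w) hw1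
        _ = 2 := by norm_num
    calc (n:ℝ) * ‖w^n - v^n‖ ≤ ‖ζ‖ * 2 := by
          apply mul_le_mul hcase h2 (norm_nonneg _) hζnn
      _ ≤ 2*‖ζ‖ + 2*‖ζ‖^2 := by nlinarith
  · push_neg at hcase
    have hz1 : ‖ζ/(n:ℂ)‖ ≤ 1 := by
      rw [norm_div, Complex.norm_natCast, div_le_one hnR]; linarith
    have hyabs : |y| ≤ 1 := by rw [abs_of_nonneg hy0]; exact hy1
    have hz2 : ‖ζ * (y:ℂ) / (n:ℂ)‖ ≤ ‖ζ‖ / n := by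
      rw [norm_div, norm_mul, Complex.norm_natCast, Complex.norm_real, Real.norm_eq_abs]
      gcongr
      calc ‖ζ‖ * |y| ≤ ‖ζ‖ * 1 := by gcongr
        _ = ‖ζ‖ := mul_one _
    have hz2' : ‖ζ * (y:ℂ) / (n:ℂ)‖ ≤ 1 := hz2.trans (by rw [div_le_one hnR]; linarith)
    have hb1 := expb2 hz1
    have hb2 := expb2 hz2'
    have t1 : ‖(y:ℂ) * (Complex.exp (ζ/(n:ℂ)) - (1 + ζ/(n:ℂ)))‖ ≤ (‖ζ‖/(n:ℝ))^2 := by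
      rw [norm_mul, Complex.norm_real, Real.norm_eq_abs]
      calc |y| * ‖Complex.exp (ζ/(n:ℂ)) - (1 + ζ/(n:ℂ))‖
          ≤ 1 * ‖ζ/(n:ℂ)‖^2 := mul_le_mul hyabs hb1 (norm_nonneg _) zero_le_one
        _ = (‖ζ‖/(n:ℝ))^2 := by rw [one_mul, norm_div, Complex.norm_natCast]
    have t2 : ‖Complex.exp (ζ * (y:ℂ)/(n:ℂ)) - (1 + ζ * (y:ℂ)/(n:ℂ))‖ ≤ (‖ζ‖/(n:ℝ))^2 :=
      hb2.trans (pow_le_pow_left₀ (norm_nonneg _) hz2 2)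
    have hid : w - v = (y:ℂ) * (Complex.exp (ζ/(n:ℂ)) - (1 + ζ/(n:ℂ)))
        - (Complex.exp (ζ * (y:ℂ)/(n:ℂ)) - (1 + ζ * (y:ℂ)/(n:ℂ))) := by
      simp only [hwdef, hvdef]; ring
    have hwv : ‖w - v‖ ≤ 2 * ‖ζ‖^2 / (n:ℝ)^2 := by
      rw [hid]
      refine (norm_sub_le _ _).trans ?_
      refine (add_le_add t1 t2).trans ?_
      rw [div_pow]
      ring_nf
      exact le_refl _
    calc (n:ℝ) * ‖w^n - v^n‖
        ≤ (n:ℝ) * ((n:ℝ) * ‖w - v‖) :=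
          mul_le_mul_of_nonneg_left (tele hw1 (le_of_eq hv1) n) hnR.le
      _ ≤ (n:ℝ) * ((n:ℝ) * (2*‖ζ‖^2/(n:ℝ)^2)) :=
          mul_le_mul_of_nonneg_left (mul_le_mul_of_nonneg_left hwv hnR.le) hnR.le
      _ = 2*‖ζ‖^2 := by field_simp
      _ ≤ 2*‖ζ‖ + 2*‖ζ‖^2 := by linarith

lemma pipow {μ : Measure ℝ} [IsProbabilityMeasure μ] (g : ℝ → ℂ) :
    ∀ m : ℕ, ∫ z : Fin m → ℝ, ∏ k, g (z k) ∂(Measure.pi fun _ => μ) = (∫ u, g u ∂μ)^m := by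
  intro m
  induction m with
  | zero => simp
  | succ m ih =>
    have hmp := measurePreserving_piFinSuccAbove (fun _ : Fin (m+1) => μ) 0
    set e := MeasurableEquiv.piFinSuccAbove (fun _ : Fin (m+1) => ℝ) 0 with he
    have h1 : ∫ z : Fin (m+1) → ℝ, ∏ k, g (z k) ∂(Measure.pi fun _ => μ)
        = ∫ pr : ℝ × (Fin m → ℝ), ∏ k, g ((e.symm pr) k) ∂(μ.prod (Measure.pi fun _ => μ)) := by
      rw [← hmp.map_eq, MeasureTheory.integral_map_equiv]
      apply integral_congr_ae; apply ae_of_all; intro x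
      congr 1
      exact (e.symm_apply_apply x).symm
    rw [h1]
    have h2 : ∀ pr : ℝ × (Fin m → ℝ), (∏ k, g ((e.symm pr) k)) = g pr.1 * ∏ j, g (pr.2 j) := by
      intro pr
      have hx : e.symm pr = Fin.cons pr.1 pr.2 := by
        simp [he, MeasurableEquiv.piFinSuccAbove, Fin.insertNthEquiv, Fin.insertNth_zero]
      rw [hx, Fin.prod_univ_succ]
      simp
    calc ∫ pr, ∏ k, g ((e.symm pr) k) ∂(μ.prod (Measure.pi fun _ => μ))
        = ∫ pr : ℝ × (Fin m → ℝ), g pr.1 * ∏ j, g (pr.2 j) ∂(μ.prod (Measure.pi fun _ => μ)) := by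
          apply integral_congr_ae; exact ae_of_all _ h2
      _ = (∫ u, g u ∂μ) * ∫ z : Fin m → ℝ, ∏ j, g (z j) ∂(Measure.pi fun _ => μ) :=
          integral_prod_mul g (fun z : Fin m → ℝ => ∏ j, g (z j))
      _ = (∫ u, g u ∂μ)^(m+1) := by rw [ih]; ring

lemma lawpi {Ω : Type*} [MeasurableSpace Ω] (P : Measure Ω) [IsProbabilityMeasure P]
    (W : ℕ → Ω → ℝ) (hmeas : ∀ i, Measurable (W i))
    (hindep : iIndepFun W P)
    (hunif : ∀ i, P.map (W i) = volume.restrict (Set.Icc (0:ℝ) 1)) (m : ℕ) :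
    P.map (fun ω (i : Fin m) => W i ω)
      = Measure.pi (fun _ : Fin m => volume.restrict (Set.Icc (0:ℝ) 1)) := by
  classical
  refine (Measure.pi_eq ?_).symm
  intro s hs
  have hvec : Measurable (fun ω (i : Fin m) => W i ω) := measurable_pi_lambda _ fun i => hmeas i
  rw [Measure.map_apply hvec (MeasurableSet.univ_pi hs)]
  set S : ℕ → Set ℝ := fun k => if h : k < m then s ⟨k, h⟩ else Set.univ with hS
  have hSm : ∀ k, MeasurableSet (S k) := by
    intro k; rw [hS]; dsimp only; split
    · exact hs _
    · exact MeasurableSet.univ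
  have hpre : (fun ω (i : Fin m) => W i ω) ⁻¹' (Set.univ.pi s)
      = ⋂ k ∈ Finset.range m, W k ⁻¹' S k := by
    ext ω
    simp only [Set.mem_preimage, Set.mem_pi, Set.mem_univ, forall_true_left, Set.mem_iInter,
      Finset.mem_range, hS]
    constructor
    · intro h k hk
      rw [dif_pos hk]; exact h ⟨k, hk⟩
    · intro h i
      have := h i.val i.isLt
      rwa [dif_pos i.isLt] at this
  rw [hpre, hindep.measure_inter_preimage_eq_mul (Finset.range m) (fun k _ => hSm k)]
  have hP : ∀ k, P (W k ⁻¹' S k) = (volume.restrict (Set.Icc (0:ℝ) 1)) (S k) := by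
    intro k; rw [← hunif k, Measure.map_apply (hmeas k) (hSm k)]
  rw [Finset.prod_congr rfl (fun k _ => hP k), ← Fin.prod_univ_eq_prod_range
    (fun k => (volume.restrict (Set.Icc (0:ℝ) 1)) (S k))]
  apply Finset.prod_congr rfl
  intro i _
  congr 1
  rw [hS]; dsimp only; rw [dif_pos i.isLt]


lemma keyrep {Ω : Type*} [MeasurableSpace Ω] (P : Measure Ω) [IsProbabilityMeasure P]
    (W : ℕ → Ω → ℝ) (hmeas : ∀ i, Measurable (W i))
    (hindep : iIndepFun W P)
    (hunif : ∀ i, P.map (W i) = volume.restrict (Set.Icc (0:ℝ) 1))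
    (Yn : ℕ → Ω → ℝ)
    (hYn : ∀ n ω, Yn n ω =
      (1 / (n : ℝ)) * ∑ k ∈ Finset.range n, (if W (k+1) ω ≤ W 0 ω then (1:ℝ) else 0))
    (ζ ξ : ℂ) (hζre : ζ.re = 0) (hξre : ξ.re = 0) (n : ℕ) (hn : 1 ≤ n) :
    ∫ ω, (Complex.exp (ζ * ((Yn n ω : ℝ):ℂ)) - Complex.exp (ζ * ((W 0 ω : ℝ):ℂ)))
        * Complex.exp (ξ * ((W 0 ω : ℝ):ℂ)) ∂P
      = ∫ y in Set.Icc (0:ℝ) 1,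
          ((1 + (Complex.exp (ζ/(n:ℂ)) - 1) * (y:ℂ))^n - Complex.exp (ζ * (y:ℂ)))
            * Complex.exp (ξ * (y:ℂ)) := by
  classical
  set μ : Measure ℝ := volume.restrict (Set.Icc (0:ℝ) 1) with hμ
  haveI hPμ : IsProbabilityMeasure μ := by
    constructor
    rw [hμ, Measure.restrict_apply_univ, Real.volume_Icc]
    norm_num
  have hn0C : (n:ℂ) ≠ 0 := Nat.cast_ne_zero.2 (by omega)
  have hn0R : (0:ℝ) < (n:ℝ) := by exact_mod_cast hn
  set d : ℂ := ζ/(n:ℂ) with hd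
  have hdre : d.re = 0 := re_div_nat hζre n
  have hnormite : ∀ t : ℝ, ∀ s : Prop, ∀ [Decidable s],
      ‖Complex.exp (d * (if s then (1:ℂ) else 0))‖ = 1 := by
    intro t s _
    split_ifs with h
    · rw [mul_one]; exact norm_exp_re_zero hdre
    · simp
  -- pointwise product formula for exp(ζ Yn)
  have hexpY : ∀ ω, Complex.exp (ζ * ((Yn n ω : ℝ):ℂ))
      = ∏ k ∈ Finset.range n, Complex.exp (d * (if W (k+1) ω ≤ W 0 ω then (1:ℂ) else 0)) := by
    intro ω
    rw [← Complex.exp_sum]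
    congr 1
    have hY : ((Yn n ω : ℝ):ℂ)
        = (1/(n:ℂ)) * ∑ k ∈ Finset.range n, (if W (k+1) ω ≤ W 0 ω then (1:ℂ) else 0) := by
      rw [hYn n ω]
      push_cast
      congr 1
      apply Finset.sum_congr rfl
      intro k _
      split_ifs <;> simp
    rw [hY, Finset.mul_sum, Finset.mul_sum]
    apply Finset.sum_congr rfl
    intro k _
    rw [hd]
    ring
  -- the function on the product space
  set Fbig : (Fin (n+1) → ℝ) → ℂ := fun x =>
    ((∏ k : Fin n, Complex.exp (d * (if x k.succ ≤ x 0 then (1:ℂ) else 0)))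
      - Complex.exp (ζ * ((x 0 : ℝ):ℂ))) * Complex.exp (ξ * ((x 0 : ℝ):ℂ)) with hFdef
  have hFmeas : Measurable Fbig := by
    apply Measurable.mul
    · apply Measurable.sub
      · apply Finset.measurable_prod
        intro k _
        apply Complex.measurable_exp.comp
        apply Measurable.const_mul
        exact Measurable.ite (measurableSet_le (measurable_pi_apply _) (measurable_pi_apply _))
          measurable_const measurable_const
      · apply Complex.measurable_exp.comp
        exact (Complex.measurable_ofReal.comp (measurable_pi_apply _)).const_mul ζ
    · apply Complex.measurable_exp.comp
      exact (Complex.measurable_ofReal.comp (measurable_pi_apply _)).const_mul ξ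
  have hFbnd : ∀ x, ‖Fbig x‖ ≤ 2 := by
    intro x
    rw [hFdef]
    simp only
    rw [norm_mul, norm_exp_re_zero (re_mul_real hξre (x 0))]
    rw [mul_one]
    refine (norm_sub_le _ _).trans ?_
    have h1 : ‖∏ k : Fin n, Complex.exp (d * (if x k.succ ≤ x 0 then (1:ℂ) else 0))‖ = 1 := by
      rw [norm_prod]
      apply Finset.prod_eq_one
      intro k _
      exact hnormite 0 _
    rw [h1, norm_exp_re_zero (re_mul_real hζre (x 0))]
    norm_num
  have hvec : Measurable (fun ω (i : Fin (n+1)) => W i ω) :=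
    measurable_pi_lambda _ fun i => hmeas i
  have hcomp : ∀ ω, (Complex.exp (ζ * ((Yn n ω : ℝ):ℂ)) - Complex.exp (ζ * ((W 0 ω : ℝ):ℂ)))
      * Complex.exp (ξ * ((W 0 ω : ℝ):ℂ)) = Fbig (fun i : Fin (n+1) => W i ω) := by
    intro ω
    rw [hFdef]
    simp only [Fin.val_succ, Fin.val_zero]
    rw [hexpY ω]
    congr 2
    rw [← Fin.prod_univ_eq_prod_range
      (fun m => Complex.exp (d * (if W (m+1) ω ≤ W 0 ω then (1:ℂ) else 0)))]
    rfl
  calc ∫ ω, (Complex.exp (ζ * ((Yn n ω : ℝ):ℂ)) - Complex.exp (ζ * ((W 0 ω : ℝ):ℂ)))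
        * Complex.exp (ξ * ((W 0 ω : ℝ):ℂ)) ∂P
      = ∫ ω, Fbig (fun i : Fin (n+1) => W i ω) ∂P := integral_congr_ae (Filter.Eventually.of_forall hcomp)
    _ = ∫ x, Fbig x ∂(P.map (fun ω (i : Fin (n+1)) => W i ω)) :=
        (integral_map hvec.aemeasurable hFmeas.aestronglyMeasurable).symm
    _ = ∫ x, Fbig x ∂(Measure.pi fun _ : Fin (n+1) => μ) := by
        rw [lawpi P W hmeas hindep hunif (n+1)]
    _ = ∫ y in Set.Icc (0:ℝ) 1,
          ((1 + (Complex.exp (ζ/(n:ℂ)) - 1) * (y:ℂ))^n - Complex.exp (ζ * (y:ℂ)))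
            * Complex.exp (ξ * (y:ℂ)) := by
        have hmp := measurePreserving_piFinSuccAbove (fun _ : Fin (n+1) => μ) 0
        set e := MeasurableEquiv.piFinSuccAbove (fun _ : Fin (n+1) => ℝ) 0 with he
        have h1 : ∫ x, Fbig x ∂(Measure.pi fun _ : Fin (n+1) => μ)
            = ∫ pr : ℝ × (Fin n → ℝ), Fbig (e.symm pr)
                ∂(μ.prod (Measure.pi fun _ : Fin n => μ)) := by
          rw [← hmp.map_eq, MeasureTheory.integral_map_equiv]
          apply integral_congr_ae
          apply Filter.Eventually.of_forall
          intro x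
          congr 1
          exact (e.symm_apply_apply x).symm
        have hInt : Integrable (fun pr : ℝ × (Fin n → ℝ) => Fbig (e.symm pr))
            (μ.prod (Measure.pi fun _ : Fin n => μ)) := by
          apply Integrable.mono' (integrable_const 2)
            ((hFmeas.comp e.symm.measurable).aestronglyMeasurable)
          exact Filter.Eventually.of_forall fun pr => hFbnd _
        rw [h1, MeasureTheory.integral_prod _ hInt]
        apply integral_congr_ae
        have hae : ∀ᵐ y ∂μ, y ∈ Set.Icc (0:ℝ) 1 := by
          rw [hμ]; exact ae_restrict_mem measurableSet_Icc
        filter_upwards [hae] with y hy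
        set gy : ℝ → ℂ := fun u => Complex.exp (d * (if u ≤ y then (1:ℂ) else 0)) with hgy
        have hcons : ∀ z : Fin n → ℝ, Fbig (e.symm (y, z))
            = (∏ k : Fin n, gy (z k)) * Complex.exp (ξ * (y:ℂ))
              - Complex.exp (ζ * (y:ℂ)) * Complex.exp (ξ * (y:ℂ)) := by
          intro z
          have hsymm : e.symm (y, z) = Fin.cons y z := by
            simp [he, MeasurableEquiv.piFinSuccAbove, Fin.insertNthEquiv, Fin.insertNth_zero]
          rw [hsymm, hFdef]
          simp only [Fin.cons_succ, Fin.cons_zero, hgy]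
          ring
        have hgmeas : Measurable gy := by
          apply Complex.measurable_exp.comp
          apply Measurable.const_mul
          exact Measurable.ite measurableSet_Iic measurable_const measurable_const
        have hgnorm : ∀ u, ‖gy u‖ = 1 := fun u => hnormite 0 _
        have hprod_meas : Measurable (fun z : Fin n → ℝ => ∏ k, gy (z k)) :=
          Finset.measurable_prod _ (fun k _ => hgmeas.comp (measurable_pi_apply k))
        have hintA : Integrable (fun z : Fin n → ℝ => (∏ k, gy (z k)) * Complex.exp (ξ * (y:ℂ)))
            (Measure.pi fun _ : Fin n => μ) := by
          apply Integrable.mono' (integrable_const 1)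
            ((hprod_meas.mul_const _).aestronglyMeasurable)
          apply Filter.Eventually.of_forall
          intro z
          rw [norm_mul, norm_prod, norm_exp_re_zero (re_mul_real hξre y)]
          simp [hgnorm]
        have hgint : ∫ u, gy u ∂μ = 1 + (Complex.exp d - 1) * (y:ℂ) := by
          have hgy2 : ∀ u, gy u
              = 1 + (Complex.exp d - 1) * Set.indicator (Set.Iic y) (fun _ => (1:ℂ)) u := by
            intro u
            simp only [hgy, Set.indicator_apply, Set.mem_Iic]
            split_ifs with h
            · rw [mul_one, mul_one]; ring
            · simp
          rw [integral_congr_ae (Filter.Eventually.of_forall hgy2),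
            integral_add (integrable_const 1)
              (((integrable_const (1:ℂ)).indicator measurableSet_Iic).const_mul _),
            integral_const, integral_const_mul, integral_indicator_const _ measurableSet_Iic]
          have hμIic : μ (Set.Iic y) = ENNReal.ofReal y := by
            rw [hμ, Measure.restrict_apply measurableSet_Iic]
            have hset : Set.Iic y ∩ Set.Icc 0 1 = Set.Icc 0 y := by
              ext u
              simp only [Set.mem_inter_iff, Set.mem_Iic, Set.mem_Icc]
              constructor
              · rintro ⟨h1, h2, h3⟩; exact ⟨h2, h1⟩
              · rintro ⟨h1, h2⟩; exact ⟨h2, h1, h2.trans hy.2⟩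
            rw [hset, Real.volume_Icc, sub_zero]
          rw [measureReal_def μ (Set.Iic y), hμIic, ENNReal.toReal_ofReal hy.1]
          simp [measure_univ, Complex.real_smul]
        calc ∫ z, Fbig (e.symm (y, z)) ∂(Measure.pi fun _ : Fin n => μ)
            = ∫ z : Fin n → ℝ, ((∏ k : Fin n, gy (z k)) * Complex.exp (ξ * (y:ℂ))
                - Complex.exp (ζ * (y:ℂ)) * Complex.exp (ξ * (y:ℂ)))
                ∂(Measure.pi fun _ : Fin n => μ) :=
              integral_congr_ae (Filter.Eventually.of_forall hcons)
          _ = (∫ z : Fin n → ℝ, (∏ k : Fin n, gy (z k)) * Complex.exp (ξ * (y:ℂ))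
                ∂(Measure.pi fun _ : Fin n => μ))
              - ∫ _z : Fin n → ℝ, Complex.exp (ζ * (y:ℂ)) * Complex.exp (ξ * (y:ℂ))
                ∂(Measure.pi fun _ : Fin n => μ) :=
              integral_sub hintA (integrable_const _)
          _ = ((∫ u, gy u ∂μ)^n) * Complex.exp (ξ * (y:ℂ))
              - Complex.exp (ζ * (y:ℂ)) * Complex.exp (ξ * (y:ℂ)) := by
              rw [integral_mul_const, pipow gy n, integral_const]
              simp [measure_univ]
          _ = ((1 + (Complex.exp (ζ/(n:ℂ)) - 1) * (y:ℂ))^n - Complex.exp (ζ * (y:ℂ)))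
              * Complex.exp (ξ * (y:ℂ)) := by
              rw [hgint, hd]
              ring

theorem stmt7
    {Ω : Type*} [MeasurableSpace Ω]
    (P : Measure Ω) [IsProbabilityMeasure P]
    (W : ℕ → Ω → ℝ) (hmeas : ∀ i, Measurable (W i))
    (hindep : iIndepFun W P)
    (hunif : ∀ i, P.map (W i) = volume.restrict (Set.Icc (0:ℝ) 1))
    (Yn : ℕ → Ω → ℝ)
    (hYn : ∀ n ω, Yn n ω =
      (1 / (n : ℝ)) * ∑ k ∈ Finset.range n, (if W (k+1) ω ≤ W 0 ω then (1:ℝ) else 0))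
    (p q : ℤ) :
    (∫ ω, (((W 0 ω - (W 0 ω)^2) / 2 : ℝ) : ℂ) *
        (-(((2 * Real.pi * (p:ℝ))^2 : ℝ) : ℂ)) *
        Complex.exp (2 * Real.pi * Complex.I * (p:ℂ) * ((W 0 ω : ℝ) : ℂ)) *
        Complex.exp (2 * Real.pi * Complex.I * (q:ℂ) * ((W 0 ω : ℝ) : ℂ)) ∂P
      = ∫ y in Set.Icc (0:ℝ) 1,
          ((-((y - y^2) / 2) * (2 * Real.pi * (p:ℝ))^2 : ℝ) : ℂ) *
            Complex.exp (2 * Real.pi * Complex.I * ((p:ℂ) + (q:ℂ)) * (y : ℂ))) ∧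
    Tendsto (fun n : ℕ => (n : ℂ) * ∫ ω,
        (Complex.exp (2 * Real.pi * Complex.I * (p:ℂ) * ((Yn n ω : ℝ) : ℂ))
          - Complex.exp (2 * Real.pi * Complex.I * (p:ℂ) * ((W 0 ω : ℝ) : ℂ))) *
        Complex.exp (2 * Real.pi * Complex.I * (q:ℂ) * ((W 0 ω : ℝ) : ℂ)) ∂P) atTop
      (nhds (∫ y in Set.Icc (0:ℝ) 1,
          ((-((y - y^2) / 2) * (2 * Real.pi * (p:ℝ))^2 : ℝ) : ℂ) *
            Complex.exp (2 * Real.pi * Complex.I * ((p:ℂ) + (q:ℂ)) * (y : ℂ)))) := by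
  classical
  set ζ : ℂ := 2 * Real.pi * Complex.I * (p:ℂ) with hζdef
  set ξ : ℂ := 2 * Real.pi * Complex.I * (q:ℂ) with hξdef
  have hζI : ζ = Complex.I * ((2 * Real.pi * (p:ℝ) : ℝ):ℂ) := by rw [hζdef]; push_cast; ring
  have hξI : ξ = Complex.I * ((2 * Real.pi * (q:ℝ) : ℝ):ℂ) := by rw [hξdef]; push_cast; ring
  have hζre : ζ.re = 0 := by rw [hζI]; simp
  have hξre : ξ.re = 0 := by rw [hξI]; simp
  have hζsq : ζ^2 = -((((2 * Real.pi * (p:ℝ))^2 : ℝ)):ℂ) := by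
    rw [hζI, mul_pow, Complex.I_sq]; push_cast; ring
  -- pointwise identity for the limit value
  have hval : ∀ y : ℝ,
      ζ^2 * ((y:ℂ) - (y:ℂ)^2)/2 * Complex.exp (ζ * (y:ℂ)) * Complex.exp (ξ * (y:ℂ))
        = ((-((y - y^2) / 2) * (2 * Real.pi * (p:ℝ))^2 : ℝ) : ℂ) *
            Complex.exp (2 * Real.pi * Complex.I * ((p:ℂ) + (q:ℂ)) * (y : ℂ)) := by
    intro y
    calc ζ^2 * ((y:ℂ) - (y:ℂ)^2)/2 * Complex.exp (ζ * (y:ℂ)) * Complex.exp (ξ * (y:ℂ))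
        = ζ^2 * ((y:ℂ) - (y:ℂ)^2)/2 * Complex.exp (ζ * (y:ℂ) + ξ * (y:ℂ)) := by
          rw [Complex.exp_add]; ring
      _ = ((-((y - y^2) / 2) * (2 * Real.pi * (p:ℝ))^2 : ℝ) : ℂ) *
            Complex.exp (2 * Real.pi * Complex.I * ((p:ℂ) + (q:ℂ)) * (y : ℂ)) := by
          have harg : ζ * (y:ℂ) + ξ * (y:ℂ)
              = 2 * Real.pi * Complex.I * ((p:ℂ) + (q:ℂ)) * (y : ℂ) := by
            rw [hζdef, hξdef]; push_cast; ring
          rw [harg, hζsq]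
          push_cast
          ring
  constructor
  · -- first part
    set f : ℝ → ℂ := fun y => (((y - y^2) / 2 : ℝ) : ℂ) *
        (-(((2 * Real.pi * (p:ℝ))^2 : ℝ) : ℂ)) *
        Complex.exp (ζ * (y:ℂ)) * Complex.exp (ξ * (y:ℂ)) with hfdef
    have hfmeas : Measurable f := by
      rw [hfdef]; fun_prop
    have hmap := integral_map (μ := P) (φ := W 0) (hmeas 0).aemeasurable
      (hfmeas.aestronglyMeasurable (μ := P.map (W 0))) (f := f)
    rw [hunif 0] at hmap
    calc ∫ ω, (((W 0 ω - (W 0 ω)^2) / 2 : ℝ) : ℂ) *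
        (-(((2 * Real.pi * (p:ℝ))^2 : ℝ) : ℂ)) *
        Complex.exp (ζ * ((W 0 ω : ℝ) : ℂ)) *
        Complex.exp (ξ * ((W 0 ω : ℝ) : ℂ)) ∂P
        = ∫ ω, f (W 0 ω) ∂P := by rfl
      _ = ∫ y in Set.Icc (0:ℝ) 1, f y := hmap.symm
      _ = ∫ y in Set.Icc (0:ℝ) 1,
          ((-((y - y^2) / 2) * (2 * Real.pi * (p:ℝ))^2 : ℝ) : ℂ) *
            Complex.exp (2 * Real.pi * Complex.I * ((p:ℂ) + (q:ℂ)) * (y : ℂ)) := by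
          apply integral_congr_ae
          apply Filter.Eventually.of_forall
          intro y
          rw [hfdef]
          simp only
          rw [← hval y, hζsq]
          push_cast
          ring
  · -- second part
    set μ : Measure ℝ := volume.restrict (Set.Icc (0:ℝ) 1) with hμ
    set F : ℕ → ℝ → ℂ := fun n y => (n:ℂ) *
        (((1 + (Complex.exp (ζ/(n:ℂ)) - 1) * (y:ℂ))^n - Complex.exp (ζ * (y:ℂ)))
          * Complex.exp (ξ * (y:ℂ))) with hFdef
    set flim : ℝ → ℂ := fun y => ((-((y - y^2) / 2) * (2 * Real.pi * (p:ℝ))^2 : ℝ) : ℂ) *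
        Complex.exp (2 * Real.pi * Complex.I * ((p:ℂ) + (q:ℂ)) * (y : ℂ)) with hflimdef
    have hDCT : Tendsto (fun n : ℕ => ∫ y, F n y ∂μ) atTop (𝓝 (∫ y, flim y ∂μ)) := by
      apply tendsto_integral_of_dominated_convergence (fun _ => 2*‖ζ‖ + 2*‖ζ‖^2)
      · intro n
        apply Continuous.aestronglyMeasurable
        rw [hFdef]
        fun_prop
      · exact integrable_const _
      · intro n
        have hae : ∀ᵐ y ∂μ, y ∈ Set.Icc (0:ℝ) 1 := by
          rw [hμ]; exact ae_restrict_mem measurableSet_Icc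
        filter_upwards [hae] with y hy
        rw [hFdef]
        simp only
        rw [norm_mul, norm_mul, Complex.norm_natCast,
          norm_exp_re_zero (re_mul_real hξre y), mul_one]
        exact Lbd hζre hy.1 hy.2 n
      · have hae : ∀ᵐ y ∂μ, y ∈ Set.Icc (0:ℝ) 1 := by
          rw [hμ]; exact ae_restrict_mem measurableSet_Icc
        filter_upwards [hae] with y hy
        have H := (Lpt hζre hy.1 hy.2).mul_const (Complex.exp (ξ * (y:ℂ)))
        rw [hval y] at H
        apply H.congr
        intro n
        rw [hFdef]
        simp only
        ring
    apply hDCT.congr'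
    filter_upwards [eventually_ge_atTop 1] with n hn
    have hkey := keyrep P W hmeas hindep hunif Yn hYn ζ ξ hζre hξre n hn
    rw [hFdef]
    simp only
    rw [integral_const_mul]
    rw [← hμ] at hkey
    rw [hkey]
end

section
/- Let (Y,Z,T) be real random variables with Z, T square integrable, G a real random variable independent of (Y,Z,T) with E[G]=0, E[G²]=1, and Y_ε = Y + εZ + √ε·T·G. Then for every φ ∈ C²_b(ℝ) and every bounded measurable χ, (1/ε) E[(φ(Y_ε) − φ(Y)) χ(Y)] → E[Z φ'(Y) χ(Y)] + (1/2) E[T² φ''(Y) χ(Y)] as ε → 0⁺. -/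
open MeasureTheory ProbabilityTheory Filter

lemma contDiff_one_of_two {φ : ℝ → ℝ} (hφ : ContDiff ℝ 2 φ) : ContDiff ℝ 1 (deriv φ) := by
  have h2 : ContDiff ℝ (1 + 1 : ℕ) φ := by exact_mod_cast hφ
  exact (contDiff_succ_iff_deriv.mp h2).2.2

lemma deriv2_lip {φ : ℝ → ℝ} (hφ : ContDiff ℝ 2 φ) {C : ℝ}
    (hC : ∀ x, |deriv (deriv φ) x| ≤ C) :
    ∀ x y : ℝ, |deriv φ y - deriv φ x| ≤ C * |y - x| := by
  intro x y
  have h1 := contDiff_one_of_two hφ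
  have := Convex.norm_image_sub_le_of_norm_deriv_le (𝕜 := ℝ) (f := deriv φ) (s := Set.univ)
    (fun z _ => (h1.differentiable one_ne_zero z)) (fun z _ => hC z) convex_univ
    (Set.mem_univ x) (Set.mem_univ y)
  simpa [Real.norm_eq_abs] using this

lemma hasDerivAt_shift {φ : ℝ → ℝ} (hφ : Differentiable ℝ φ) (a t : ℝ) :
    HasDerivAt (fun s => φ (a + s)) (deriv φ (a + t)) t := by
  simpa [Function.comp_def] using (hφ (a + t)).hasDerivAt.comp t ((hasDerivAt_id t).const_add a)

lemma taylor1_bound {φ : ℝ → ℝ} (hφ : ContDiff ℝ 2 φ) {C : ℝ}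
    (hC : ∀ x, |deriv (deriv φ) x| ≤ C) (a h : ℝ) :
    |φ (a + h) - φ a - h * deriv φ a| ≤ C * h ^ 2 := by
  have hdiff : Differentiable ℝ φ := hφ.differentiable two_ne_zero
  set v : ℝ → ℝ := fun s => φ (a + s) - s * deriv φ a with hv
  have hv' : ∀ s, HasDerivAt v (deriv φ (a + s) - deriv φ a) s := fun s =>
    (hasDerivAt_shift hdiff a s).sub (hasDerivAt_mul_const (deriv φ a))
  have key := Convex.norm_image_sub_le_of_norm_hasDerivWithin_le (𝕜 := ℝ)
    (f := v) (f' := fun s => deriv φ (a + s) - deriv φ a) (s := Set.Icc (-|h|) |h|)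
    (C := C * |h|)
    (fun s _ => (hv' s).hasDerivWithinAt)
    (fun s hs => by
      have h1 : |deriv φ (a + s) - deriv φ a| ≤ C * |s| := by
        simpa using deriv2_lip hφ hC a (a + s)
      have h2 : |s| ≤ |h| := abs_le.mpr ⟨hs.1, hs.2⟩
      have hC0 : 0 ≤ C := le_trans (abs_nonneg _) (hC 0)
      calc ‖deriv φ (a + s) - deriv φ a‖ ≤ C * |s| := h1
      _ ≤ C * |h| := by nlinarith)
    (convex_Icc _ _)
    ⟨neg_nonpos.mpr (abs_nonneg h), abs_nonneg h⟩
    ⟨neg_abs_le h, le_abs_self h⟩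
  have h3 : |φ (a + h) - φ a - h * deriv φ a| ≤ C * |h| * |h| := by
    have e : v h - v 0 = φ (a + h) - φ a - h * deriv φ a := by
      simp only [hv]; ring_nf
    have := key
    rw [Real.norm_eq_abs, Real.norm_eq_abs, e, sub_zero] at this
    exact this
  calc |φ (a + h) - φ a - h * deriv φ a| ≤ C * |h| * |h| := h3
    _ = C * h ^ 2 := by rw [mul_assoc, abs_mul_abs_self, ← pow_two]

lemma taylor2_est {φ : ℝ → ℝ} (hφ : ContDiff ℝ 2 φ) (a : ℝ) {δ : ℝ} (hδ : 0 < δ) :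
    ∃ r > 0, ∀ h : ℝ, |h| ≤ r →
      |φ (a + h) - φ a - h * deriv φ a - h ^ 2 / 2 * deriv (deriv φ) a| ≤ δ * h ^ 2 := by
  have hdiff : Differentiable ℝ φ := hφ.differentiable two_ne_zero
  have h1 : ContDiff ℝ 1 (deriv φ) := contDiff_one_of_two hφ
  have hd2 : HasDerivAt (deriv φ) (deriv (deriv φ) a) a :=
    ((h1.differentiable one_ne_zero) a).hasDerivAt
  have hlo := hasDerivAt_iff_isLittleO_nhds_zero.mp hd2
  have hev : ∀ᶠ t in nhds (0:ℝ), |deriv φ (a + t) - deriv φ a - t * deriv (deriv φ) a| ≤ δ * |t| := by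
    have := hlo.def hδ
    simpa [Real.norm_eq_abs, smul_eq_mul] using this
  obtain ⟨r', hr', hball⟩ := Metric.eventually_nhds_iff.mp hev
  refine ⟨r' / 2, by positivity, fun h hh => ?_⟩
  set u : ℝ → ℝ := fun s => φ (a + s) - s * deriv φ a - s ^ 2 / 2 * deriv (deriv φ) a with hu
  have hu' : ∀ s, HasDerivAt u (deriv φ (a + s) - deriv φ a - s * deriv (deriv φ) a) s := by
    intro s
    have hp : HasDerivAt (fun s : ℝ => s ^ 2 / 2 * deriv (deriv φ) a)
        (s * deriv (deriv φ) a) s := by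
      have := ((hasDerivAt_pow 2 s).div_const 2).mul_const (deriv (deriv φ) a)
      simpa using this.congr_deriv (by push_cast; ring)
    exact ((hasDerivAt_shift hdiff a s).sub (hasDerivAt_mul_const (deriv φ a))).sub hp
  have key := Convex.norm_image_sub_le_of_norm_hasDerivWithin_le (𝕜 := ℝ)
    (f := u) (f' := fun s => deriv φ (a + s) - deriv φ a - s * deriv (deriv φ) a)
    (s := Set.Icc (-|h|) |h|) (C := δ * |h|)
    (fun s _ => (hu' s).hasDerivWithinAt)
    (fun s hs => by
      have h2 : |s| ≤ |h| := abs_le.mpr ⟨hs.1, hs.2⟩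
      have hsr : dist s 0 < r' := by
        rw [Real.dist_eq, sub_zero]
        calc |s| ≤ |h| := h2
          _ ≤ r' / 2 := hh
          _ < r' := by linarith
      calc ‖deriv φ (a + s) - deriv φ a - s * deriv (deriv φ) a‖ ≤ δ * |s| := hball hsr
        _ ≤ δ * |h| := by nlinarith)
    (convex_Icc _ _)
    ⟨neg_nonpos.mpr (abs_nonneg h), abs_nonneg h⟩
    ⟨neg_abs_le h, le_abs_self h⟩
  have e : u h - u 0 = φ (a + h) - φ a - h * deriv φ a - h ^ 2 / 2 * deriv (deriv φ) a := by
    simp only [hu]; ring_nf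
  rw [Real.norm_eq_abs, Real.norm_eq_abs, e, sub_zero] at key
  calc |φ (a + h) - φ a - h * deriv φ a - h ^ 2 / 2 * deriv (deriv φ) a| ≤ δ * |h| * |h| := key
    _ = δ * h ^ 2 := by rw [mul_assoc, abs_mul_abs_self, ← pow_two]

lemma sq_div_tendsto (z t g : ℝ) :
    Tendsto (fun ε : ℝ => (ε * z + Real.sqrt ε * t * g) ^ 2 / ε)
      (nhdsWithin 0 (Set.Ioi 0)) (nhds ((t * g) ^ 2)) := by
  have hcong : ∀ ε ∈ Set.Ioi (0:ℝ),
      (ε * z + Real.sqrt ε * t * g) ^ 2 / ε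
        = ε * z ^ 2 + 2 * Real.sqrt ε * (z * (t * g)) + (t * g) ^ 2 := by
    intro ε hε
    have hε0 : (ε:ℝ) ≠ 0 := ne_of_gt hε
    have hsq : Real.sqrt ε ^ 2 = ε := Real.sq_sqrt (le_of_lt hε)
    rw [div_eq_iff hε0]
    rw [show (ε * z + Real.sqrt ε * t * g) ^ 2
        = ε ^ 2 * z ^ 2 + 2 * ε * Real.sqrt ε * (z * (t * g)) + Real.sqrt ε ^ 2 * (t * g) ^ 2
        by ring, hsq]
    ring
  have hc : Tendsto (fun ε : ℝ => ε * z ^ 2 + 2 * Real.sqrt ε * (z * (t * g)) + (t * g) ^ 2)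
      (nhdsWithin 0 (Set.Ioi 0)) (nhds ((t * g) ^ 2)) := by
    have hcont : Continuous (fun ε : ℝ => ε * z ^ 2 + 2 * Real.sqrt ε * (z * (t * g)) + (t * g) ^ 2) := by
      continuity
    have := (hcont.tendsto 0).mono_left (nhdsWithin_le_nhds (s := Set.Ioi (0:ℝ)))
    simpa using this
  exact hc.congr' (by filter_upwards [self_mem_nhdsWithin] with ε hε using (hcong ε hε).symm)

lemma h_tendsto_zero (z t g : ℝ) :
    Tendsto (fun ε : ℝ => ε * z + Real.sqrt ε * t * g)
      (nhdsWithin 0 (Set.Ioi 0)) (nhds 0) := by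
  have hcont : Continuous (fun ε : ℝ => ε * z + Real.sqrt ε * t * g) := by continuity
  have := (hcont.tendsto 0).mono_left (nhdsWithin_le_nhds (s := Set.Ioi (0:ℝ)))
  simpa using this

lemma pointwise_lim {φ : ℝ → ℝ} (hφ : ContDiff ℝ 2 φ) (a z t g : ℝ) :
    Tendsto (fun ε : ℝ =>
        (φ (a + (ε * z + Real.sqrt ε * t * g)) - φ a
          - (ε * z + Real.sqrt ε * t * g) * deriv φ a) / ε)
      (nhdsWithin 0 (Set.Ioi 0))
      (nhds ((t * g) ^ 2 / 2 * deriv (deriv φ) a)) := by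
  set h : ℝ → ℝ := fun ε => ε * z + Real.sqrt ε * t * g with hh
  have S1 := sq_div_tendsto z t g
  have S0 := h_tendsto_zero z t g
  have S2 : Tendsto (fun ε : ℝ =>
      (φ (a + h ε) - φ a - h ε * deriv φ a - (h ε) ^ 2 / 2 * deriv (deriv φ) a) / ε)
      (nhdsWithin 0 (Set.Ioi 0)) (nhds 0) := by
    rw [NormedAddCommGroup.tendsto_nhds_zero]
    intro δ' hδ'
    set M : ℝ := (t * g) ^ 2 + 1 with hM
    have hM0 : 0 < M := by positivity
    obtain ⟨r, hr, hest⟩ := taylor2_est hφ a (δ := δ' / (2 * M)) (by positivity)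
    have E1 : ∀ᶠ ε in nhdsWithin 0 (Set.Ioi 0), |h ε| ≤ r := by
      have := Metric.tendsto_nhds.mp S0 r hr
      filter_upwards [this] with ε hε
      rw [Real.dist_eq, sub_zero] at hε; exact le_of_lt hε
    have E2 : ∀ᶠ ε in nhdsWithin 0 (Set.Ioi 0), (h ε) ^ 2 / ε < M :=
      S1.eventually_lt_const (by simp [hM])
    have E3 : ∀ᶠ ε in nhdsWithin 0 (Set.Ioi 0), ε ∈ Set.Ioi (0:ℝ) := self_mem_nhdsWithin
    filter_upwards [E1, E2, E3] with ε h1 h2 h3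
    have hε0 : (0:ℝ) < ε := h3
    have hb := hest (h ε) h1
    have hpos : (0:ℝ) ≤ (h ε) ^ 2 / ε := by positivity
    rw [Real.norm_eq_abs, abs_div, abs_of_pos hε0]
    calc |φ (a + h ε) - φ a - h ε * deriv φ a - (h ε) ^ 2 / 2 * deriv (deriv φ) a| / ε
        ≤ (δ' / (2 * M) * (h ε) ^ 2) / ε := by
          gcongr
      _ = δ' / (2 * M) * ((h ε) ^ 2 / ε) := by ring
      _ ≤ δ' / (2 * M) * M := by
          apply mul_le_mul_of_nonneg_left (le_of_lt h2) (by positivity)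
      _ = δ' / 2 := by field_simp
      _ < δ' := by linarith
  have ha : (fun ε : ℝ => (φ (a + h ε) - φ a - h ε * deriv φ a) / ε)
      = fun ε => (φ (a + h ε) - φ a - h ε * deriv φ a - (h ε) ^ 2 / 2 * deriv (deriv φ) a) / ε
        + ((h ε) ^ 2 / ε) * (deriv (deriv φ) a / 2) := by
    funext ε; ring
  have := S2.add (S1.mul_const (deriv (deriv φ) a / 2))
  rw [← ha] at this
  rw [show (t * g) ^ 2 / 2 * deriv (deriv φ) a
      = 0 + (t * g) ^ 2 * (deriv (deriv φ) a / 2) by ring]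
  exact this

theorem stmt8
    {Ω : Type*} [MeasurableSpace Ω]
    (P : Measure Ω) [IsProbabilityMeasure P]
    (Y Z T G : Ω → ℝ)
    (hYm : Measurable Y) (hZm : Measurable Z) (hTm : Measurable T) (hGm : Measurable G)
    (hZ2 : MemLp Z 2 P) (hT2 : MemLp T 2 P)
    (hGindep : IndepFun G (fun ω => (Y ω, Z ω, T ω)) P)
    (hGc : ∫ ω, G ω ∂P = 0) (hGv : ∫ ω, (G ω)^2 ∂P = 1)
    (φ : ℝ → ℝ) (hφ : ContDiff ℝ 2 φ)
    (hφb : ∃ C, ∀ x, |φ x| ≤ C) (hφ'b : ∃ C, ∀ x, |deriv φ x| ≤ C)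
    (hφ''b : ∃ C, ∀ x, |deriv (deriv φ) x| ≤ C)
    (χ : ℝ → ℝ) (hχm : Measurable χ) (hχb : ∃ C, ∀ x, |χ x| ≤ C) :
    Tendsto (fun ε : ℝ => (1/ε) *
        ∫ ω, (φ (Y ω + ε * Z ω + Real.sqrt ε * T ω * G ω) - φ (Y ω)) * χ (Y ω) ∂P)
      (nhdsWithin 0 (Set.Ioi 0))
      (nhds ((∫ ω, Z ω * deriv φ (Y ω) * χ (Y ω) ∂P)
        + (1/2) * ∫ ω, (T ω)^2 * deriv (deriv φ) (Y ω) * χ (Y ω) ∂P)) := by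
  obtain ⟨C0, hC0⟩ := hφb
  obtain ⟨C1, hC1⟩ := hφ'b
  obtain ⟨C2, hC2⟩ := hφ''b
  obtain ⟨C3, hC3⟩ := hχb
  have hC0_0 : 0 ≤ C0 := le_trans (abs_nonneg _) (hC0 0)
  have hC1_0 : 0 ≤ C1 := le_trans (abs_nonneg _) (hC1 0)
  have hC2_0 : 0 ≤ C2 := le_trans (abs_nonneg _) (hC2 0)
  have hC3_0 : 0 ≤ C3 := le_trans (abs_nonneg _) (hC3 0)
  have hφc : Continuous φ := hφ.continuous
  have hφ'c : Continuous (deriv φ) := hφ.continuous_deriv one_le_two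
  have hφ''c : Continuous (deriv (deriv φ)) := (contDiff_one_of_two hφ).continuous_deriv le_rfl
  -- basic integrability
  have hZ1 : Integrable Z P := hZ2.integrable one_le_two
  have hT1 : Integrable T P := hT2.integrable one_le_two
  have hZsq : Integrable (fun ω => (Z ω)^2) P :=
    (memLp_two_iff_integrable_sq hZm.aestronglyMeasurable).mp hZ2
  have hTsq : Integrable (fun ω => (T ω)^2) P :=
    (memLp_two_iff_integrable_sq hTm.aestronglyMeasurable).mp hT2
  have hGsq : Integrable (fun ω => (G ω)^2) P := by
    by_contra hc
    rw [integral_undef hc] at hGv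
    norm_num at hGv
  have hG1 : Integrable G P :=
    ((memLp_two_iff_integrable_sq hGm.aestronglyMeasurable).mpr hGsq).integrable one_le_two
  -- independence consequences
  have hψ2 : Measurable (fun p : ℝ × ℝ × ℝ => p.2.2 * deriv φ p.1 * χ p.1) :=
    (((measurable_snd.comp measurable_snd).mul
      (hφ'c.measurable.comp measurable_fst)).mul (hχm.comp measurable_fst))
  have hIndepGW2 : IndepFun G (fun ω => T ω * deriv φ (Y ω) * χ (Y ω)) P :=
    hGindep.comp measurable_id hψ2
  have hW2m : Measurable (fun ω => T ω * deriv φ (Y ω) * χ (Y ω)) :=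
    ((hTm.mul (hφ'c.measurable.comp hYm)).mul (hχm.comp hYm))
  have hW2int : Integrable (fun ω => T ω * deriv φ (Y ω) * χ (Y ω)) P := by
    refine (hT1.abs.mul_const (C1 * C3)).mono' hW2m.aestronglyMeasurable (ae_of_all _ fun ω => ?_)
    rw [Real.norm_eq_abs, abs_mul, abs_mul]
    rw [show |T ω| * (C1 * C3) = |T ω| * C1 * C3 by ring]
    gcongr
    · exact hC1 _
    · exact hC3 _
  have hEGW2 : ∫ ω, G ω * (T ω * deriv φ (Y ω) * χ (Y ω)) ∂P = 0 := by
    have h' := hIndepGW2.integral_mul_eq_mul_integral hGm.aestronglyMeasurable hW2m.aestronglyMeasurable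
    have h0 : ∫ ω, G ω * (T ω * deriv φ (Y ω) * χ (Y ω)) ∂P
        = integral P G * ∫ ω, T ω * deriv φ (Y ω) * χ (Y ω) ∂P := h'
    rw [h0, hGc, zero_mul]
  have hW1m : Measurable (fun ω => Z ω * deriv φ (Y ω) * χ (Y ω)) :=
    ((hZm.mul (hφ'c.measurable.comp hYm)).mul (hχm.comp hYm))
  have hW1int : Integrable (fun ω => Z ω * deriv φ (Y ω) * χ (Y ω)) P := by
    refine (hZ1.abs.mul_const (C1 * C3)).mono' hW1m.aestronglyMeasurable (ae_of_all _ fun ω => ?_)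
    rw [Real.norm_eq_abs, abs_mul, abs_mul]
    rw [show |Z ω| * (C1 * C3) = |Z ω| * C1 * C3 by ring]
    gcongr
    · exact hC1 _
    · exact hC3 _
  have hGW2int : Integrable (fun ω => G ω * (T ω * deriv φ (Y ω) * χ (Y ω))) P := by
    have := hIndepGW2.integrable_mul hG1 hW2int
    exact this
  -- integrability of (T G)^2
  have hIndepT2G2 : IndepFun (fun ω => (G ω)^2) (fun ω => (T ω)^2) P :=
    hGindep.comp (measurable_id.pow_const 2)
      ((measurable_snd.comp measurable_snd).pow_const 2)
  have hTGsq : Integrable (fun ω => (T ω * G ω)^2) P := by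
    have h' := hIndepT2G2.symm.integrable_mul hTsq hGsq
    simp only [Pi.mul_def] at h'
    have heq : (fun ω => (T ω * G ω)^2) = fun ω => (T ω)^2 * (G ω)^2 :=
      funext fun ω => mul_pow _ _ _
    rw [heq]; exact h'
  -- the remainder integrand
  set F : ℝ → Ω → ℝ := fun ε ω =>
    (φ (Y ω + ε * Z ω + Real.sqrt ε * T ω * G ω) - φ (Y ω)
      - (ε * Z ω + Real.sqrt ε * T ω * G ω) * deriv φ (Y ω)) / ε * χ (Y ω) with hF
  have hFmeas : ∀ ε : ℝ, AEStronglyMeasurable (F ε) P := by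
    intro ε
    have hm1 : Measurable fun ω => Y ω + ε * Z ω + Real.sqrt ε * T ω * G ω :=
      (hYm.add (hZm.const_mul ε)).add ((hTm.const_mul (Real.sqrt ε)).mul hGm)
    have hm2 : Measurable fun ω => ε * Z ω + Real.sqrt ε * T ω * G ω :=
      (hZm.const_mul ε).add ((hTm.const_mul (Real.sqrt ε)).mul hGm)
    exact ((((hφc.measurable.comp hm1).sub (hφc.measurable.comp hYm)).sub
      (hm2.mul (hφ'c.measurable.comp hYm))).div_const ε).mul
      (hχm.comp hYm) |>.aestronglyMeasurable
  -- dominated convergence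
  have hDCT : Tendsto (fun ε => ∫ ω, F ε ω ∂P) (nhdsWithin 0 (Set.Ioi 0))
      (nhds (∫ ω, (T ω * G ω) ^ 2 / 2 * deriv (deriv φ) (Y ω) * χ (Y ω) ∂P)) := by
    apply tendsto_integral_filter_of_dominated_convergence
      (bound := fun ω => C2 * (2 * (Z ω)^2 + 2 * (T ω * G ω)^2) * C3)
    · exact Eventually.of_forall hFmeas
    · have hIoc : Set.Ioc (0:ℝ) 1 ∈ nhdsWithin (0:ℝ) (Set.Ioi 0) :=
        Ioc_mem_nhdsGT_of_mem ⟨le_refl 0, one_pos⟩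
      filter_upwards [hIoc] with ε hε
      refine ae_of_all _ fun ω => ?_
      have hε0 : (0:ℝ) < ε := hε.1
      have hε1 : ε ≤ 1 := hε.2
      have hR : |φ (Y ω + ε * Z ω + Real.sqrt ε * T ω * G ω) - φ (Y ω)
          - (ε * Z ω + Real.sqrt ε * T ω * G ω) * deriv φ (Y ω)|
          ≤ C2 * (ε * Z ω + Real.sqrt ε * T ω * G ω) ^ 2 := by
        have := taylor1_bound hφ hC2 (Y ω) (ε * Z ω + Real.sqrt ε * T ω * G ω)
        rw [← add_assoc] at this
        exact this
      have hq2 : (ε * Z ω + Real.sqrt ε * T ω * G ω) ^ 2 / ε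
          ≤ 2 * (Z ω)^2 + 2 * (T ω * G ω)^2 := by
        rw [div_le_iff₀ hε0]
        have hA2 : Real.sqrt ε ^ 2 = ε := Real.sq_sqrt hε0.le
        have hA1 : Real.sqrt ε ≤ 1 := by
          rw [show (1:ℝ) = Real.sqrt 1 by simp]
          exact Real.sqrt_le_sqrt hε1
        have hA0 : (0:ℝ) ≤ Real.sqrt ε := Real.sqrt_nonneg ε
        set A := Real.sqrt ε with hA
        rw [← hA2]
        nlinarith [sq_nonneg (A * (Z ω - T ω * G ω)), sq_nonneg (A * (Z ω + T ω * G ω)),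
          sq_nonneg (Z ω - T ω * G ω), sq_nonneg (Z ω + T ω * G ω), sq_nonneg A,
          mul_nonneg (mul_nonneg hA0 hA0) (sq_nonneg (Z ω - T ω * G ω)),
          mul_nonneg (mul_nonneg hA0 hA0) (sq_nonneg (Z ω + T ω * G ω)),
          mul_nonneg (sub_nonneg.mpr hA1) (mul_nonneg (mul_nonneg hA0 hA0) (sq_nonneg (Z ω))),
          mul_nonneg (sub_nonneg.mpr hA1) (mul_nonneg hA0 (sq_nonneg (Z ω))),
          mul_nonneg (sub_nonneg.mpr hA1) (sq_nonneg (A * Z ω))]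
      calc ‖F ε ω‖
          = |φ (Y ω + ε * Z ω + Real.sqrt ε * T ω * G ω) - φ (Y ω)
              - (ε * Z ω + Real.sqrt ε * T ω * G ω) * deriv φ (Y ω)| / ε * |χ (Y ω)| := by
            rw [hF]; rw [Real.norm_eq_abs, abs_mul, abs_div, abs_of_pos hε0]
        _ ≤ (C2 * (ε * Z ω + Real.sqrt ε * T ω * G ω) ^ 2) / ε * C3 := by
            gcongr
            exact hC3 _
        _ = C2 * ((ε * Z ω + Real.sqrt ε * T ω * G ω) ^ 2 / ε) * C3 := by ring
        _ ≤ C2 * (2 * (Z ω)^2 + 2 * (T ω * G ω)^2) * C3 := by gcongr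
    · exact (((hZsq.const_mul 2).add (hTGsq.const_mul 2)).const_mul C2).mul_const C3
    · refine ae_of_all _ fun ω => ?_
      have := (pointwise_lim hφ (Y ω) (Z ω) (T ω) (G ω)).mul_const (χ (Y ω))
      refine this.congr fun ε => ?_
      rw [hF]
      rw [← add_assoc]
  -- the integral of the limit
  have hLint : ∫ ω, (T ω * G ω) ^ 2 / 2 * deriv (deriv φ) (Y ω) * χ (Y ω) ∂P
      = (1/2) * ∫ ω, (T ω)^2 * deriv (deriv φ) (Y ω) * χ (Y ω) ∂P := by
    have h1 : ∫ ω, (T ω * G ω) ^ 2 / 2 * deriv (deriv φ) (Y ω) * χ (Y ω) ∂P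
        = ∫ ω, (G ω)^2 * ((1/2) * ((T ω)^2 * deriv (deriv φ) (Y ω) * χ (Y ω))) ∂P :=
      integral_congr_ae (ae_of_all _ fun ω => by ring)
    have hψ3 : Measurable (fun p : ℝ × ℝ × ℝ =>
        (1/2 : ℝ) * (p.2.2 ^ 2 * deriv (deriv φ) p.1 * χ p.1)) :=
      ((((measurable_snd.comp measurable_snd).pow_const 2).mul
        (hφ''c.measurable.comp measurable_fst)).mul (hχm.comp measurable_fst)).const_mul _
    have hInd : IndepFun (fun ω => (G ω)^2)
        (fun ω => (1/2 : ℝ) * ((T ω)^2 * deriv (deriv φ) (Y ω) * χ (Y ω))) P :=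
      hGindep.comp (measurable_id.pow_const 2) hψ3
    have h2 := hInd.integral_mul_eq_mul_integral (hGm.pow_const 2).aestronglyMeasurable
      (((((hTm.pow_const 2).mul (hφ''c.measurable.comp hYm)).mul
        (hχm.comp hYm)).const_mul _).aestronglyMeasurable)
    have h2' : ∫ ω, (G ω)^2 * ((1/2:ℝ) * ((T ω)^2 * deriv (deriv φ) (Y ω) * χ (Y ω))) ∂P
        = (∫ ω, (G ω)^2 ∂P) * ∫ ω, (1/2:ℝ) * ((T ω)^2 * deriv (deriv φ) (Y ω) * χ (Y ω)) ∂P := h2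
    rw [h1, h2', hGv, one_mul, integral_const_mul]
  -- the decomposition identity, eventually in ε
  have hEq : ∀ᶠ ε in nhdsWithin (0:ℝ) (Set.Ioi 0),
      (1/ε) * ∫ ω, (φ (Y ω + ε * Z ω + Real.sqrt ε * T ω * G ω) - φ (Y ω)) * χ (Y ω) ∂P
      = (∫ ω, F ε ω ∂P) + ∫ ω, Z ω * deriv φ (Y ω) * χ (Y ω) ∂P := by
    filter_upwards [self_mem_nhdsWithin] with ε hε
    have hε0 : (0:ℝ) < ε := hε
    have hm1 : Measurable fun ω => Y ω + ε * Z ω + Real.sqrt ε * T ω * G ω :=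
      (hYm.add (hZm.const_mul ε)).add ((hTm.const_mul (Real.sqrt ε)).mul hGm)
    have hm2 : Measurable fun ω => ε * Z ω + Real.sqrt ε * T ω * G ω :=
      (hZm.const_mul ε).add ((hTm.const_mul (Real.sqrt ε)).mul hGm)
    -- integrability of the full integrand
    have hTotint : Integrable (fun ω =>
        (φ (Y ω + ε * Z ω + Real.sqrt ε * T ω * G ω) - φ (Y ω)) * χ (Y ω)) P := by
      refine (integrable_const (2 * C0 * C3)).mono'
        (((hφc.measurable.comp hm1).sub (hφc.measurable.comp hYm)).mul
          (hχm.comp hYm)).aestronglyMeasurable (ae_of_all _ fun ω => ?_)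
      rw [Real.norm_eq_abs, abs_mul]
      have h1 : |φ (Y ω + ε * Z ω + Real.sqrt ε * T ω * G ω) - φ (Y ω)| ≤ 2 * C0 :=
        le_trans (abs_sub _ _) (by linarith [hC0 (Y ω + ε * Z ω + Real.sqrt ε * T ω * G ω), hC0 (Y ω)])
      calc |φ (Y ω + ε * Z ω + Real.sqrt ε * T ω * G ω) - φ (Y ω)| * |χ (Y ω)|
          ≤ (2 * C0) * C3 := mul_le_mul h1 (hC3 _) (abs_nonneg _) (by positivity)
        _ = 2 * C0 * C3 := by ring
    have hRχint : Integrable (fun ω =>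
        (φ (Y ω + ε * Z ω + Real.sqrt ε * T ω * G ω) - φ (Y ω)
          - (ε * Z ω + Real.sqrt ε * T ω * G ω) * deriv φ (Y ω)) * χ (Y ω)) P := by
      have heq : (fun ω =>
          (φ (Y ω + ε * Z ω + Real.sqrt ε * T ω * G ω) - φ (Y ω)
            - (ε * Z ω + Real.sqrt ε * T ω * G ω) * deriv φ (Y ω)) * χ (Y ω))
          = fun ω => (φ (Y ω + ε * Z ω + Real.sqrt ε * T ω * G ω) - φ (Y ω)) * χ (Y ω)
            - ε * (Z ω * deriv φ (Y ω) * χ (Y ω))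
            - Real.sqrt ε * (G ω * (T ω * deriv φ (Y ω) * χ (Y ω))) :=
        funext fun ω => by ring
      rw [heq]
      exact (hTotint.sub (hW1int.const_mul ε)).sub (hGW2int.const_mul _)
    have hdecomp : ∫ ω, (φ (Y ω + ε * Z ω + Real.sqrt ε * T ω * G ω) - φ (Y ω)) * χ (Y ω) ∂P
        = (∫ ω, (φ (Y ω + ε * Z ω + Real.sqrt ε * T ω * G ω) - φ (Y ω)
            - (ε * Z ω + Real.sqrt ε * T ω * G ω) * deriv φ (Y ω)) * χ (Y ω) ∂P)
          + (ε * ∫ ω, Z ω * deriv φ (Y ω) * χ (Y ω) ∂P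
            + Real.sqrt ε * ∫ ω, G ω * (T ω * deriv φ (Y ω) * χ (Y ω)) ∂P) := by
      have e1 : ∫ ω, (φ (Y ω + ε * Z ω + Real.sqrt ε * T ω * G ω) - φ (Y ω)) * χ (Y ω) ∂P
          = ∫ ω, ((φ (Y ω + ε * Z ω + Real.sqrt ε * T ω * G ω) - φ (Y ω)
              - (ε * Z ω + Real.sqrt ε * T ω * G ω) * deriv φ (Y ω)) * χ (Y ω)
            + (ε * (Z ω * deriv φ (Y ω) * χ (Y ω))
              + Real.sqrt ε * (G ω * (T ω * deriv φ (Y ω) * χ (Y ω))))) ∂P :=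
        integral_congr_ae (ae_of_all _ fun ω => by ring)
      have hg1 : Integrable (fun ω => Real.sqrt ε * (G ω * (T ω * deriv φ (Y ω) * χ (Y ω)))) P :=
        hGW2int.const_mul _
      have hg2 : Integrable (fun ω => ε * (Z ω * deriv φ (Y ω) * χ (Y ω))) P :=
        hW1int.const_mul ε
      have hg : Integrable (fun ω => ε * (Z ω * deriv φ (Y ω) * χ (Y ω))
          + Real.sqrt ε * (G ω * (T ω * deriv φ (Y ω) * χ (Y ω)))) P := hg2.add hg1
      rw [e1, integral_add hRχint hg, integral_add hg2 hg1,
        integral_const_mul, integral_const_mul]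
    rw [hdecomp, hEGW2, mul_zero, add_zero, mul_add]
    congr 1
    · rw [hF, ← integral_const_mul]
      exact integral_congr_ae (ae_of_all _ fun ω => by ring)
    · rw [← mul_assoc, one_div, inv_mul_cancel₀ (ne_of_gt hε0), one_mul]
  -- conclusion
  have hfinal := hDCT.add_const (∫ ω, Z ω * deriv φ (Y ω) * χ (Y ω) ∂P)
  rw [hLint] at hfinal
  have : Tendsto (fun ε : ℝ => (1/ε) *
      ∫ ω, (φ (Y ω + ε * Z ω + Real.sqrt ε * T ω * G ω) - φ (Y ω)) * χ (Y ω) ∂P)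
      (nhdsWithin 0 (Set.Ioi 0))
      (nhds ((1/2) * (∫ ω, (T ω)^2 * deriv (deriv φ) (Y ω) * χ (Y ω) ∂P)
        + ∫ ω, Z ω * deriv φ (Y ω) * χ (Y ω) ∂P)) :=
    Tendsto.congr' (hEq.mono fun ε h => h.symm) hfinal
  rw [add_comm] at this
  exact this
end

section
/- With the same setup (Y_ε = Y + εZ + √ε T G, Z and T square integrable, G independent of (Y,Z,T), centered, unit variance), for all φ, χ ∈ C¹_b(ℝ): (1/ε) E[(φ(Y_ε)−φ(Y))(χ(Y_ε)−χ(Y))] → E[T² φ'(Y) χ'(Y)] as ε → 0⁺. -/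
open MeasureTheory ProbabilityTheory Filter

/-- Slope-at-zero helper: value `deriv f y` at `t = 0`, difference quotient otherwise. -/
noncomputable def sIf (f : ℝ → ℝ) (y t : ℝ) : ℝ :=
  if t = 0 then deriv f y else (f (y + t) - f y) / t

lemma sIf_mul (f : ℝ → ℝ) (y t : ℝ) : sIf f y t * t = f (y + t) - f y := by
  by_cases h : t = 0
  · simp [sIf, h]
  · simp [sIf, h, div_mul_cancel₀ _ h]

lemma tendsto_sIf {f : ℝ → ℝ} {y : ℝ} (hf : DifferentiableAt ℝ f y) :
    Tendsto (sIf f y) (nhds 0) (nhds (deriv f y)) := by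
  rw [← nhdsNE_sup_pure (0:ℝ), tendsto_sup]
  constructor
  · have h1 : Tendsto (fun t : ℝ => t⁻¹ • (f (y + t) - f y)) (nhdsWithin 0 {0}ᶜ)
        (nhds (deriv f y)) := hasDerivAt_iff_tendsto_slope_zero.mp hf.hasDerivAt
    refine h1.congr' ?_
    filter_upwards [self_mem_nhdsWithin] with t ht
    have ht0 : t ≠ 0 := ht
    simp [sIf, ht0, smul_eq_mul, div_eq_inv_mul]
  · have : Tendsto (sIf f y) (pure (0:ℝ)) (nhds (sIf f y 0)) := tendsto_pure_nhds _ _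
    simpa [sIf] using this

theorem stmt9
    {Ω : Type*} [MeasurableSpace Ω]
    (P : Measure Ω) [IsProbabilityMeasure P]
    (Y Z T G : Ω → ℝ)
    (hYm : Measurable Y) (hZm : Measurable Z) (hTm : Measurable T) (hGm : Measurable G)
    (hZ2 : MemLp Z 2 P) (hT2 : MemLp T 2 P)
    (hGindep : IndepFun G (fun ω => (Y ω, Z ω, T ω)) P)
    (hGc : ∫ ω, G ω ∂P = 0) (hGv : ∫ ω, (G ω)^2 ∂P = 1)
    (φ χ : ℝ → ℝ) (hφ : ContDiff ℝ 1 φ) (hχ : ContDiff ℝ 1 χ)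
    (hφb : ∃ C, ∀ x, |φ x| ≤ C) (hφ'b : ∃ C, ∀ x, |deriv φ x| ≤ C)
    (hχb : ∃ C, ∀ x, |χ x| ≤ C) (hχ'b : ∃ C, ∀ x, |deriv χ x| ≤ C) :
    Tendsto (fun ε : ℝ => (1/ε) *
        ∫ ω, (φ (Y ω + ε * Z ω + Real.sqrt ε * T ω * G ω) - φ (Y ω))
            * (χ (Y ω + ε * Z ω + Real.sqrt ε * T ω * G ω) - χ (Y ω)) ∂P)
      (nhdsWithin 0 (Set.Ioi 0))
      (nhds (∫ ω, (T ω)^2 * deriv φ (Y ω) * deriv χ (Y ω) ∂P)) := by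
  obtain ⟨C₁, hC₁⟩ := hφ'b
  obtain ⟨C₂, hC₂⟩ := hχ'b
  have hC₁0 : 0 ≤ C₁ := le_trans (abs_nonneg _) (hC₁ 0)
  have hC₂0 : 0 ≤ C₂ := le_trans (abs_nonneg _) (hC₂ 0)
  have hφd : Differentiable ℝ φ := hφ.differentiable one_ne_zero
  have hχd : Differentiable ℝ χ := hχ.differentiable one_ne_zero
  have hφ'c : Continuous (deriv φ) := hφ.continuous_deriv le_rfl
  have hχ'c : Continuous (deriv χ) := hχ.continuous_deriv le_rfl
  -- Lipschitz estimates
  have hφlip : ∀ a b : ℝ, |φ a - φ b| ≤ C₁ * |a - b| := by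
    intro a b
    have := Convex.norm_image_sub_le_of_norm_deriv_le (f := φ) (s := Set.univ)
      (fun x _ => hφd x) (fun x _ => by simpa using hC₁ x) convex_univ
      (Set.mem_univ b) (Set.mem_univ a)
    simpa [Real.norm_eq_abs] using this
  have hχlip : ∀ a b : ℝ, |χ a - χ b| ≤ C₂ * |a - b| := by
    intro a b
    have := Convex.norm_image_sub_le_of_norm_deriv_le (f := χ) (s := Set.univ)
      (fun x _ => hχd x) (fun x _ => by simpa using hC₂ x) convex_univ
      (Set.mem_univ b) (Set.mem_univ a)
    simpa [Real.norm_eq_abs] using this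
  -- Integrability facts
  have hG2int : Integrable (fun ω => G ω ^ 2) P := by
    by_contra h
    rw [integral_undef (by simpa [pow_two] using h)] at hGv
    norm_num at hGv
  have hZ2int : Integrable (fun ω => Z ω ^ 2) P := hZ2.integrable_sq
  have hT2int : Integrable (fun ω => T ω ^ 2) P := hT2.integrable_sq
  -- independence of G² and functions of (Y,Z,T)
  have hindep1 : IndepFun (fun ω => G ω ^ 2) (fun ω => T ω ^ 2) P := by
    have := hGindep.comp (φ := fun x : ℝ => x ^ 2)
      (ψ := fun p : ℝ × ℝ × ℝ => p.2.2 ^ 2)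
      (measurable_id.pow_const 2) ((measurable_snd.comp measurable_snd).pow_const 2)
    exact this
  have hTG2int : Integrable (fun ω => T ω ^ 2 * G ω ^ 2) P := by
    have := hindep1.symm.integrable_mul hT2int hG2int
    exact this
  have hTGint : Integrable (fun ω => (T ω * G ω) ^ 2) P := by
    refine hTG2int.congr ?_
    filter_upwards with ω using by ring
  have hindep2 : IndepFun (fun ω => G ω ^ 2)
      (fun ω => T ω ^ 2 * deriv φ (Y ω) * deriv χ (Y ω)) P := by
    have := hGindep.comp (φ := fun x : ℝ => x ^ 2)
      (ψ := fun p : ℝ × ℝ × ℝ => p.2.2 ^ 2 * deriv φ p.1 * deriv χ p.1)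
      (measurable_id.pow_const 2)
      ((((measurable_snd.comp measurable_snd).pow_const 2).mul
        (hφ'c.measurable.comp measurable_fst)).mul (hχ'c.measurable.comp measurable_fst))
    exact this
  -- the dominated convergence theorem
  set F : ℝ → Ω → ℝ := fun ε ω => (1/ε) *
      ((φ (Y ω + ε * Z ω + Real.sqrt ε * T ω * G ω) - φ (Y ω))
        * (χ (Y ω + ε * Z ω + Real.sqrt ε * T ω * G ω) - χ (Y ω))) with hF
  set L : Ω → ℝ := fun ω => deriv φ (Y ω) * deriv χ (Y ω) * (T ω * G ω) ^ 2 with hL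
  have hmeas : ∀ᶠ ε in nhdsWithin (0:ℝ) (Set.Ioi 0), AEStronglyMeasurable (F ε) P := by
    filter_upwards with ε
    have hYε : Measurable fun ω => Y ω + ε * Z ω + Real.sqrt ε * T ω * G ω :=
      (hYm.add (hZm.const_mul ε)).add ((hTm.const_mul (Real.sqrt ε)).mul hGm)
    exact ((((hφ.continuous.measurable.comp hYε).sub
      (hφ.continuous.measurable.comp hYm)).mul
      ((hχ.continuous.measurable.comp hYε).sub
      (hχ.continuous.measurable.comp hYm))).const_mul _).aestronglyMeasurable
  have hbound : ∀ᶠ ε in nhdsWithin (0:ℝ) (Set.Ioi 0), ∀ᵐ ω ∂P,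
      ‖F ε ω‖ ≤ 2 * (C₁ * C₂) * (Z ω ^ 2 + (T ω * G ω) ^ 2) := by
    have hIoc : Set.Ioc (0:ℝ) 1 ∈ nhdsWithin (0:ℝ) (Set.Ioi 0) :=
      Ioc_mem_nhdsGT_of_mem (by constructor <;> norm_num)
    filter_upwards [hIoc] with ε hε
    obtain ⟨hε0, hε1⟩ := hε
    filter_upwards with ω
    set y := Y ω; set z := Z ω; set t := T ω; set g := G ω
    have hs : Real.sqrt ε * Real.sqrt ε = ε := Real.mul_self_sqrt hε0.le
    set h := ε * z + Real.sqrt ε * t * g with hhdef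
    have e1 : y + ε * z + Real.sqrt ε * t * g = y + h := by rw [hhdef]; ring
    have hfac : h = Real.sqrt ε * (Real.sqrt ε * z + t * g) := by
      rw [hhdef, mul_add, ← mul_assoc, hs]; ring
    have hA : |φ (y + h) - φ y| ≤ C₁ * |h| := by
      have := hφlip (y + h) y
      simpa using this
    have hB : |χ (y + h) - χ y| ≤ C₂ * |h| := by
      have := hχlip (y + h) y
      simpa using this
    have hFval : ‖F ε ω‖ = (1/ε) * (|φ (y + h) - φ y| * |χ (y + h) - χ y|) := by
      simp only [hF, show Y ω + ε * Z ω + Real.sqrt ε * T ω * G ω = y + h from e1, Real.norm_eq_abs, abs_mul]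
      rw [abs_of_pos (by positivity : (0:ℝ) < 1/ε)]
    rw [hFval]
    have step1 : (1/ε) * (|φ (y + h) - φ y| * |χ (y + h) - χ y|)
        ≤ (1/ε) * ((C₁ * |h|) * (C₂ * |h|)) := by
      apply mul_le_mul_of_nonneg_left _ (by positivity)
      exact mul_le_mul hA hB (abs_nonneg _) (by positivity)
    refine step1.trans ?_
    have hh2 : |h| * |h| = ε * (Real.sqrt ε * z + t * g) ^ 2 := by
      rw [← abs_mul, hfac]
      have e : Real.sqrt ε * (Real.sqrt ε * z + t * g) * (Real.sqrt ε * (Real.sqrt ε * z + t * g))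
          = (Real.sqrt ε * Real.sqrt ε) * (Real.sqrt ε * z + t * g) ^ 2 := by ring
      rw [e, hs, abs_of_nonneg (by positivity)]
    have e2 : (1/ε) * ((C₁ * |h|) * (C₂ * |h|)) = C₁ * C₂ * (Real.sqrt ε * z + t * g) ^ 2 := by
      have : (C₁ * |h|) * (C₂ * |h|) = C₁ * C₂ * (|h| * |h|) := by ring
      rw [this, hh2]
      field_simp
    rw [e2]
    have hsq : (Real.sqrt ε * z + t * g) ^ 2 ≤ 2 * (z ^ 2 + (t * g) ^ 2) := by
      have h1 : Real.sqrt ε ≤ 1 := by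
        rw [show (1:ℝ) = Real.sqrt 1 by simp]
        exact Real.sqrt_le_sqrt hε1
      have h0 : 0 ≤ Real.sqrt ε := Real.sqrt_nonneg _
      nlinarith [sq_nonneg (Real.sqrt ε * z - t * g), sq_nonneg (Real.sqrt ε * z + t * g),
        sq_nonneg z, sq_nonneg (t * g)]
    calc C₁ * C₂ * (Real.sqrt ε * z + t * g) ^ 2
        ≤ C₁ * C₂ * (2 * (z ^ 2 + (t * g) ^ 2)) := by
          apply mul_le_mul_of_nonneg_left hsq (by positivity)
      _ = 2 * (C₁ * C₂) * (z ^ 2 + (t * g) ^ 2) := by ring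
  have hbddint : Integrable (fun ω => 2 * (C₁ * C₂) * (Z ω ^ 2 + (T ω * G ω) ^ 2)) P :=
    (hZ2int.add hTGint).const_mul _
  have hlim : ∀ᵐ ω ∂P, Tendsto (fun ε => F ε ω) (nhdsWithin (0:ℝ) (Set.Ioi 0)) (nhds (L ω)) := by
    filter_upwards with ω
    set y := Y ω; set z := Z ω; set t := T ω; set g := G ω
    have hh : Tendsto (fun ε : ℝ => ε * z + Real.sqrt ε * t * g)
        (nhdsWithin (0:ℝ) (Set.Ioi 0)) (nhds 0) := by
      have hc : Continuous fun ε : ℝ => ε * z + Real.sqrt ε * t * g :=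
        (continuous_id.mul continuous_const).add
          ((Real.continuous_sqrt.mul continuous_const).mul continuous_const)
      have := hc.tendsto' 0 0 (by simp)
      exact this.mono_left nhdsWithin_le_nhds
    have hsq : Tendsto (fun ε : ℝ => (Real.sqrt ε * z + t * g) ^ 2)
        (nhdsWithin (0:ℝ) (Set.Ioi 0)) (nhds ((t * g) ^ 2)) := by
      have hc : Continuous fun ε : ℝ => (Real.sqrt ε * z + t * g) ^ 2 :=
        ((Real.continuous_sqrt.mul continuous_const).add continuous_const).pow 2
      have := hc.tendsto' 0 ((t * g) ^ 2) (by simp)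
      exact this.mono_left nhdsWithin_le_nhds
    have hmain : Tendsto (fun ε : ℝ =>
        sIf φ y (ε * z + Real.sqrt ε * t * g) * sIf χ y (ε * z + Real.sqrt ε * t * g)
          * (Real.sqrt ε * z + t * g) ^ 2)
        (nhdsWithin (0:ℝ) (Set.Ioi 0)) (nhds (L ω)) := by
      have h1 := ((tendsto_sIf (hφd y)).comp hh).mul ((tendsto_sIf (hχd y)).comp hh)
      exact h1.mul hsq
    refine hmain.congr' ?_
    filter_upwards [self_mem_nhdsWithin] with ε hε
    have hε0 : (0:ℝ) < ε := hε
    have hs : Real.sqrt ε * Real.sqrt ε = ε := Real.mul_self_sqrt hε0.le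
    set h := ε * z + Real.sqrt ε * t * g with hhdef
    have e1 : y + ε * z + Real.sqrt ε * t * g = y + h := by rw [hhdef]; ring
    have e2 : φ (y + h) - φ y = sIf φ y h * h := (sIf_mul φ y h).symm
    have e3 : χ (y + h) - χ y = sIf χ y h * h := (sIf_mul χ y h).symm
    have hh2 : h * h = ε * (Real.sqrt ε * z + t * g) ^ 2 := by
      have hfac : h = Real.sqrt ε * (Real.sqrt ε * z + t * g) := by
        rw [hhdef, mul_add, ← mul_assoc, hs]; ring
      have e : Real.sqrt ε * (Real.sqrt ε * z + t * g) * (Real.sqrt ε * (Real.sqrt ε * z + t * g))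
          = (Real.sqrt ε * Real.sqrt ε) * (Real.sqrt ε * z + t * g) ^ 2 := by ring
      rw [hfac, e, hs]
    show sIf φ y h * sIf χ y h * (Real.sqrt ε * z + t * g) ^ 2 = F ε ω
    simp only [hF, show Y ω + ε * Z ω + Real.sqrt ε * T ω * G ω = y + h from e1,
      show φ (y + h) - φ (Y ω) = sIf φ y h * h from e2, show χ (y + h) - χ (Y ω) = sIf χ y h * h from e3]
    have : sIf φ y h * h * (sIf χ y h * h) = sIf φ y h * sIf χ y h * (h * h) := by ring
    rw [this, hh2]
    field_simp
  have hDCT := MeasureTheory.tendsto_integral_filter_of_dominated_convergence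
    (μ := P) (F := F) (f := L)
    (fun ω => 2 * (C₁ * C₂) * (Z ω ^ 2 + (T ω * G ω) ^ 2)) hmeas hbound hbddint hlim
  -- identify the limit integral via independence
  have hLint : ∫ ω, L ω ∂P = ∫ ω, (T ω)^2 * deriv φ (Y ω) * deriv χ (Y ω) ∂P := by
    have e : (fun ω => L ω)
        = (fun ω => G ω ^ 2) * (fun ω => T ω ^ 2 * deriv φ (Y ω) * deriv χ (Y ω)) := by
      funext ω; simp only [hL, Pi.mul_apply]; ring
    rw [e, hindep2.integral_mul_eq_mul_integral (hGm.pow_const 2).aestronglyMeasurable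
      (((hTm.pow_const 2).mul (hφ'c.measurable.comp hYm)).mul
        (hχ'c.measurable.comp hYm)).aestronglyMeasurable, hGv, one_mul]
  -- convert (1/ε) * ∫ ... into ∫ (1/ε) * ...
  have hfun : ∀ ε : ℝ, (1/ε) *
      ∫ ω, (φ (Y ω + ε * Z ω + Real.sqrt ε * T ω * G ω) - φ (Y ω))
          * (χ (Y ω + ε * Z ω + Real.sqrt ε * T ω * G ω) - χ (Y ω)) ∂P
      = ∫ ω, F ε ω ∂P := by
    intro ε
    rw [hF]
    rw [integral_const_mul]
  rw [← hLint]
  refine hDCT.congr ?_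
  intro ε
  exact (hfun ε).symm
end

section
/- Suppose hypothesis (U) holds: for P_Y-a.e. y, the conditional law of Y_n given Y = y is δ_{η_n(y)} for a measurable map η_n. Suppose furthermore that for some α_n → +∞ and an algebra D, α_n E[(φ(Y_n) − φ(Y)) χ(Y)] → ⟨Ā[φ], χ⟩_{L²(P_Y)} for all φ ∈ D and all χ ∈ L²(P_Y). Then α_n E[(φ(Y_n) − φ(Y))²] → 0 for every φ ∈ D; consequently (H1)–(H3) hold with Ã = 0 and A̲ = −Ā. -/
open MeasureTheory ProbabilityTheory Filter

section Aux
variable {X : Type*} [MeasurableSpace X] {μ : Measure X}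

lemma l2inner_eq {f g : X → ℝ} (hf : MemLp f 2 μ) (hg : MemLp g 2 μ) :
    (inner ℝ (hf.toLp f) (hg.toLp g) : ℝ) = ∫ y, f y * g y ∂μ := by
  rw [MeasureTheory.L2.inner_def]
  refine integral_congr_ae ?_
  filter_upwards [hf.coeFn_toLp, hg.coeFn_toLp] with y h1 h2
  simp [h1, h2, RCLike.inner_apply, mul_comm]

lemma integral_sq_CS {f g : X → ℝ} (hf : MemLp f 2 μ) (hg : MemLp g 2 μ) :
    (∫ y, f y * g y ∂μ)^2 ≤ (∫ y, f y * f y ∂μ) * (∫ y, g y * g y ∂μ) := by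
  rw [← l2inner_eq hf hg, ← l2inner_eq hf hf, ← l2inner_eq hg hg]
  have h := real_inner_mul_inner_self_le (hf.toLp f) (hg.toLp g)
  nlinarith [h]

lemma weak_bounded (f : ℕ → X → ℝ) (hf : ∀ n, MemLp (f n) 2 μ)
    (hconv : ∀ χ : X → ℝ, MemLp χ 2 μ →
      ∃ l : ℝ, Tendsto (fun n => ∫ y, f n y * χ y ∂μ) atTop (nhds l)) :
    ∃ K : ℝ, 0 ≤ K ∧ ∀ n, ∫ y, f n y * f n y ∂μ ≤ K := by
  set G : ℕ → Lp ℝ 2 μ := fun n => (hf n).toLp (f n) with hG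
  have heq : ∀ n (χ : Lp ℝ 2 μ), (innerSL ℝ (G n)) χ = ∫ y, f n y * (χ : X → ℝ) y ∂μ := by
    intro n χ
    have h0 : ((Lp.memLp χ).toLp (χ : X → ℝ)) = χ := Lp.toLp_coeFn χ (Lp.memLp χ)
    calc (innerSL ℝ (G n)) χ = (inner ℝ (G n) χ : ℝ) := rfl
      _ = (inner ℝ ((hf n).toLp (f n)) ((Lp.memLp χ).toLp (χ : X → ℝ)) : ℝ) := by rw [h0]
      _ = ∫ y, f n y * (χ : X → ℝ) y ∂μ := l2inner_eq _ _
  have hpt : ∀ χ : Lp ℝ 2 μ, ∃ C, ∀ n, ‖(innerSL ℝ (G n)) χ‖ ≤ C := by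
    intro χ
    obtain ⟨l, hl⟩ := hconv χ (Lp.memLp χ)
    have hl' : Tendsto (fun n => ‖(innerSL ℝ (G n)) χ‖) atTop (nhds ‖l‖) := by
      simp only [heq]
      exact hl.norm
    obtain ⟨C, hC⟩ := hl'.bddAbove_range
    exact ⟨C, fun n => hC (Set.mem_range_self n)⟩
  obtain ⟨K0, hK0⟩ := banach_steinhaus hpt
  have hGn : ∀ n, ‖G n‖ ≤ K0 := fun n => by
    have h := hK0 n
    rwa [innerSL_apply_norm] at h
  refine ⟨K0^2, sq_nonneg _, fun n => ?_⟩
  have h1 : ∫ y, f n y * f n y ∂μ = ‖G n‖^2 := by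
    rw [← l2inner_eq (hf n) (hf n), real_inner_self_eq_norm_sq]
  rw [h1]
  have h2 : (0:ℝ) ≤ ‖G n‖ := norm_nonneg _
  nlinarith [hGn n]

end Aux

theorem stmt18
    {Ω E : Type*} [MeasurableSpace Ω] [MeasurableSpace E]
    (P : Measure Ω) [IsProbabilityMeasure P]
    (Y : Ω → E) (hYm : Measurable Y) (Yn : ℕ → Ω → E)
    (D : Set (E → ℝ))
    (hD : ∀ φ ∈ D, Measurable φ ∧ ∃ C, ∀ x, |φ x| ≤ C)
    (α : ℕ → ℝ) (hαpos : ∀ n, 0 < α n) (hα : Tendsto α atTop atTop)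
    (η : ℕ → E → E) (hηm : ∀ n, Measurable (η n))
    (hU : ∀ n, ∀ᵐ ω ∂P, Yn n ω = η n (Y ω))
    (Abar : (E → ℝ) → (E → ℝ))
    (hAL2 : ∀ φ ∈ D, MemLp (Abar φ) 2 (P.map Y))
    (H1 : ∀ φ ∈ D, ∀ χ : E → ℝ, MemLp χ 2 (P.map Y) →
      Tendsto (fun n => α n * ∫ ω, (φ (Yn n ω) - φ (Y ω)) * χ (Y ω) ∂P) atTop
        (nhds (∫ y, Abar φ y * χ y ∂(P.map Y)))) :
    (∀ φ ∈ D, Tendsto (fun n => α n * ∫ ω, (φ (Yn n ω) - φ (Y ω))^2 ∂P) atTop (nhds 0)) ∧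
    (∀ φ ∈ D, ∀ χ ∈ D,
      Tendsto (fun n => α n * ∫ ω, (φ (Y ω) - φ (Yn n ω)) * χ (Yn n ω) ∂P) atTop
        (nhds (∫ y, (-Abar φ y) * χ y ∂(P.map Y)))) ∧
    (∀ φ ∈ D, ∀ χ ∈ D,
      Tendsto (fun n => α n * ∫ ω, (φ (Yn n ω) - φ (Y ω)) * (χ (Yn n ω) - χ (Y ω)) ∂P)
        atTop (nhds 0)) := by
  set μ := P.map Y with hμ
  haveI : IsProbabilityMeasure μ := Measure.isProbabilityMeasure_map hYm.aemeasurable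
  have push : ∀ (n : ℕ) (H : E → E → ℝ), AEStronglyMeasurable (fun y => H (η n y) y) μ →
      ∫ ω, H (Yn n ω) (Y ω) ∂P = ∫ y, H (η n y) y ∂μ := by
    intro n H hH
    have h1 : ∫ ω, H (Yn n ω) (Y ω) ∂P = ∫ ω, H (η n (Y ω)) (Y ω) ∂P :=
      integral_congr_ae (by filter_upwards [hU n] with ω h; rw [h])
    rw [h1, hμ]
    exact (integral_map hYm.aemeasurable (by rwa [← hμ])).symm
  have memD : ∀ χ ∈ D, MemLp χ 2 μ := by
    intro χ hχ
    obtain ⟨hm, C, hC⟩ := hD χ hχ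
    exact MemLp.of_bound hm.aestronglyMeasurable C
      (Eventually.of_forall (fun y => by simpa [Real.norm_eq_abs] using hC y))
  have memdiff : ∀ g ∈ D, ∀ n, MemLp (fun y => g (η n y) - g y) 2 μ := by
    intro g hg n
    obtain ⟨hm, C, hC⟩ := hD g hg
    refine MemLp.of_bound ((hm.comp (hηm n)).sub hm).aestronglyMeasurable (C + C)
      (Eventually.of_forall (fun y => ?_))
    rw [Real.norm_eq_abs]
    exact (abs_sub _ _).trans (add_le_add (hC _) (hC _))
  have intble : ∀ (g h : E → ℝ), Measurable g → Measurable h →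
      (∃ C, ∀ x, |g x| ≤ C) → (∃ C, ∀ x, |h x| ≤ C) →
      Integrable (fun y => g y * h y) μ := by
    rintro g h hg hh ⟨C1, h1⟩ ⟨C2, h2⟩
    refine memLp_one_iff_integrable.mp (MemLp.of_bound (hg.mul hh).aestronglyMeasurable (C1 * C2)
      (Eventually.of_forall (fun y => ?_)))
    rw [Real.norm_eq_abs, abs_mul]
    exact mul_le_mul (h1 y) (h2 y) (abs_nonneg _) ((abs_nonneg _).trans (h1 y))
  have master : ∀ φ ∈ D, ∃ K : ℝ, 0 ≤ K ∧ ∀ n,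
      (α n)^2 * ∫ y, (φ (η n y) - φ y) * (φ (η n y) - φ y) ∂μ ≤ K := by
    intro φ hφ
    obtain ⟨hφm, Cφ, hCφ⟩ := hD φ hφ
    have hfmem : ∀ n, MemLp (fun y => α n * (φ (η n y) - φ y)) 2 μ :=
      fun n => (memdiff φ hφ n).const_mul (α n)
    have hconv : ∀ χ : E → ℝ, MemLp χ 2 μ → ∃ l : ℝ,
        Tendsto (fun n => ∫ y, (α n * (φ (η n y) - φ y)) * χ y ∂μ) atTop (nhds l) := by
      intro χ hχ
      refine ⟨∫ y, Abar φ y * χ y ∂μ, ?_⟩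
      have heq : ∀ n, α n * ∫ ω, (φ (Yn n ω) - φ (Y ω)) * χ (Y ω) ∂P
          = ∫ y, (α n * (φ (η n y) - φ y)) * χ y ∂μ := by
        intro n
        rw [push n (fun u y => (φ u - φ y) * χ y)
          (((hφm.comp (hηm n)).aestronglyMeasurable.sub hφm.aestronglyMeasurable).mul
            hχ.aestronglyMeasurable)]
        calc α n * ∫ y, (φ (η n y) - φ y) * χ y ∂μ
            = ∫ y, α n * ((φ (η n y) - φ y) * χ y) ∂μ := (integral_const_mul _ _).symm
          _ = ∫ y, (α n * (φ (η n y) - φ y)) * χ y ∂μ :=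
              integral_congr_ae (Eventually.of_forall (fun y => by ring))
      exact (H1 φ hφ χ hχ).congr heq
    obtain ⟨K, hK0, hK⟩ := weak_bounded (fun n y => α n * (φ (η n y) - φ y)) hfmem hconv
    refine ⟨K, hK0, fun n => ?_⟩
    have h2 : ∫ y, (α n * (φ (η n y) - φ y)) * (α n * (φ (η n y) - φ y)) ∂μ
        = (α n)^2 * ∫ y, (φ (η n y) - φ y) * (φ (η n y) - φ y) ∂μ :=
      calc ∫ y, (α n * (φ (η n y) - φ y)) * (α n * (φ (η n y) - φ y)) ∂μ
          = ∫ y, (α n)^2 * ((φ (η n y) - φ y) * (φ (η n y) - φ y)) ∂μ :=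
            integral_congr_ae (Eventually.of_forall (fun y => by ring))
        _ = (α n)^2 * ∫ y, (φ (η n y) - φ y) * (φ (η n y) - φ y) ∂μ :=
            integral_const_mul _ _
    exact le_of_eq_of_le h2.symm (hK n)
  have part1 : ∀ φ ∈ D, Tendsto (fun n => α n * ∫ ω, (φ (Yn n ω) - φ (Y ω))^2 ∂P) atTop (nhds 0) := by
    intro φ hφ
    obtain ⟨hφm, Cφ, hCφ⟩ := hD φ hφ
    obtain ⟨K, hK0, hK⟩ := master φ hφ
    have heq : ∀ n, α n * ∫ ω, (φ (Yn n ω) - φ (Y ω))^2 ∂P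
        = (1 / α n) * ((α n)^2 * ∫ y, (φ (η n y) - φ y) * (φ (η n y) - φ y) ∂μ) := by
      intro n
      rw [push n (fun u y => (φ u - φ y)^2)
        (((hφm.comp (hηm n)).sub hφm).pow_const 2).aestronglyMeasurable]
      have h2 : ∫ y, (φ (η n y) - φ y)^2 ∂μ = ∫ y, (φ (η n y) - φ y) * (φ (η n y) - φ y) ∂μ :=
        integral_congr_ae (Eventually.of_forall (fun y => by ring))
      rw [h2]
      have hne := (hαpos n).ne'
      field_simp
    have hnonneg : ∀ n, 0 ≤ α n * ∫ ω, (φ (Yn n ω) - φ (Y ω))^2 ∂P := fun n =>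
      mul_nonneg (hαpos n).le (integral_nonneg (fun ω => sq_nonneg _))
    refine squeeze_zero hnonneg (fun n => ?_) (tendsto_const_nhds.div_atTop hα (f := fun _ => K))
    rw [heq n]
    calc (1 / α n) * ((α n)^2 * ∫ y, (φ (η n y) - φ y) * (φ (η n y) - φ y) ∂μ)
        ≤ (1 / α n) * K :=
          mul_le_mul_of_nonneg_left (hK n) (one_div_nonneg.mpr (hαpos n).le)
      _ = K / α n := one_div_mul_eq_div _ _
  have part3 : ∀ φ ∈ D, ∀ χ ∈ D,
      Tendsto (fun n => α n * ∫ ω, (φ (Yn n ω) - φ (Y ω)) * (χ (Yn n ω) - χ (Y ω)) ∂P)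
        atTop (nhds 0) := by
    intro φ hφ χ hχ
    obtain ⟨hφm, Cφ, hCφ⟩ := hD φ hφ
    obtain ⟨hχm, Cχ, hCχ⟩ := hD χ hχ
    obtain ⟨Kφ, hKφ0, hKφ⟩ := master φ hφ
    obtain ⟨Kχ, hKχ0, hKχ⟩ := master χ hχ
    refine squeeze_zero_norm (fun n => ?_)
      (tendsto_const_nhds.div_atTop hα (f := fun _ => Real.sqrt (Kφ * Kχ)))
    have hpush : ∫ ω, (φ (Yn n ω) - φ (Y ω)) * (χ (Yn n ω) - χ (Y ω)) ∂P
        = ∫ y, (φ (η n y) - φ y) * (χ (η n y) - χ y) ∂μ :=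
      push n (fun u y => (φ u - φ y) * (χ u - χ y))
        (((hφm.comp (hηm n)).aestronglyMeasurable.sub hφm.aestronglyMeasurable).mul
          ((hχm.comp (hηm n)).aestronglyMeasurable.sub hχm.aestronglyMeasurable))
    rw [hpush]
    set I := ∫ y, (φ (η n y) - φ y) * (χ (η n y) - χ y) ∂μ with hI
    set Aφ := ∫ y, (φ (η n y) - φ y) * (φ (η n y) - φ y) ∂μ with hAφ
    set Aχ := ∫ y, (χ (η n y) - χ y) * (χ (η n y) - χ y) ∂μ with hAχ
    have hCS : I^2 ≤ Aφ * Aχ := integral_sq_CS (memdiff φ hφ n) (memdiff χ hχ n)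
    have hAφ0 : 0 ≤ Aφ := integral_nonneg (fun y => mul_self_nonneg _)
    have hAχ0 : 0 ≤ Aχ := integral_nonneg (fun y => mul_self_nonneg _)
    have han := hαpos n
    have hv2 : (α n * I)^2 ≤ Kφ * Kχ / (α n)^2 := by
      rw [le_div_iff₀ (pow_pos han 2)]
      calc (α n * I)^2 * (α n)^2 = (α n)^2 * (α n)^2 * I^2 := by ring
        _ ≤ (α n)^2 * (α n)^2 * (Aφ * Aχ) :=
            mul_le_mul_of_nonneg_left hCS (by positivity)
        _ = ((α n)^2 * Aφ) * ((α n)^2 * Aχ) := by ring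
        _ ≤ Kφ * Kχ := mul_le_mul (hKφ n) (hKχ n) (mul_nonneg (sq_nonneg _) hAχ0) hKφ0
    calc ‖α n * I‖ = Real.sqrt ((α n * I)^2) := by
          rw [Real.sqrt_sq_eq_abs, Real.norm_eq_abs]
      _ ≤ Real.sqrt (Kφ * Kχ / (α n)^2) := Real.sqrt_le_sqrt hv2
      _ = Real.sqrt (Kφ * Kχ) / α n := by
          rw [Real.sqrt_div (mul_nonneg hKφ0 hKχ0), Real.sqrt_sq han.le]
  have part2 : ∀ φ ∈ D, ∀ χ ∈ D,
      Tendsto (fun n => α n * ∫ ω, (φ (Y ω) - φ (Yn n ω)) * χ (Yn n ω) ∂P) atTop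
        (nhds (∫ y, (-Abar φ y) * χ y ∂μ)) := by
    intro φ hφ χ hχ
    obtain ⟨hφm, Cφ, hCφ⟩ := hD φ hφ
    obtain ⟨hχm, Cχ, hCχ⟩ := hD χ hχ
    have h1 := H1 φ hφ χ (memD χ hχ)
    have h3 := part3 φ hφ χ hχ
    have heq : ∀ n, -(α n * ∫ ω, (φ (Yn n ω) - φ (Y ω)) * χ (Y ω) ∂P)
        - α n * ∫ ω, (φ (Yn n ω) - φ (Y ω)) * (χ (Yn n ω) - χ (Y ω)) ∂P
        = α n * ∫ ω, (φ (Y ω) - φ (Yn n ω)) * χ (Yn n ω) ∂P := by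
      intro n
      have hm1 : Measurable (fun y => φ (η n y) - φ y) := (hφm.comp (hηm n)).sub hφm
      have hb1 : ∃ C, ∀ x, |φ (η n x) - φ x| ≤ C :=
        ⟨Cφ + Cφ, fun x => (abs_sub _ _).trans (add_le_add (hCφ _) (hCφ _))⟩
      have hm2 : Measurable (fun y => χ (η n y) - χ y) := (hχm.comp (hηm n)).sub hχm
      have hb2 : ∃ C, ∀ x, |χ (η n x) - χ x| ≤ C :=
        ⟨Cχ + Cχ, fun x => (abs_sub _ _).trans (add_le_add (hCχ _) (hCχ _))⟩
      have hm0 : Measurable (fun y => φ y - φ (η n y)) := hφm.sub (hφm.comp (hηm n))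
      have hb0 : ∃ C, ∀ x, |φ x - φ (η n x)| ≤ C :=
        ⟨Cφ + Cφ, fun x => (abs_sub _ _).trans (add_le_add (hCφ _) (hCφ _))⟩
      have hmχη : Measurable (fun y => χ (η n y)) := hχm.comp (hηm n)
      rw [push n (fun u y => (φ y - φ u) * χ u) ((hm0.mul hmχη).aestronglyMeasurable),
        push n (fun u y => (φ u - φ y) * χ y) ((hm1.mul hχm).aestronglyMeasurable),
        push n (fun u y => (φ u - φ y) * (χ u - χ y)) ((hm1.mul hm2).aestronglyMeasurable)]
      have hint1 : Integrable (fun y => (φ (η n y) - φ y) * χ y) μ :=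
        intble _ _ hm1 hχm hb1 ⟨Cχ, hCχ⟩
      have hint3 : Integrable (fun y => (φ (η n y) - φ y) * (χ (η n y) - χ y)) μ :=
        intble _ _ hm1 hm2 hb1 hb2
      have hint2 : Integrable (fun y => (φ y - φ (η n y)) * χ (η n y)) μ :=
        intble _ _ hm0 hmχη hb0 ⟨Cχ, fun x => hCχ _⟩
      have hadd : (∫ y, (φ y - φ (η n y)) * χ (η n y) ∂μ)
          + ((∫ y, (φ (η n y) - φ y) * χ y ∂μ)
            + ∫ y, (φ (η n y) - φ y) * (χ (η n y) - χ y) ∂μ) = 0 := by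
        have hint13 : Integrable (fun y => (φ (η n y) - φ y) * χ y
            + (φ (η n y) - φ y) * (χ (η n y) - χ y)) μ := hint1.add hint3
        rw [← integral_add hint1 hint3, ← integral_add hint2 hint13]
        have : (fun y => (φ y - φ (η n y)) * χ (η n y)
            + ((φ (η n y) - φ y) * χ y + (φ (η n y) - φ y) * (χ (η n y) - χ y)))
            = fun _ => (0:ℝ) := funext (fun y => by ring)
        rw [this, integral_zero]
      linear_combination (-(α n)) * hadd
    have hlim : ∫ y, (-Abar φ y) * χ y ∂μ = -(∫ y, Abar φ y * χ y ∂μ) - 0 := by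
      simp only [neg_mul, sub_zero]
      rw [integral_neg]
    rw [hlim]
    exact (h1.neg.sub h3).congr heq
  exact ⟨part1, part2, part3⟩
end
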